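/- arXiv:2102.07773 — 4 statements merged into one kernel-verified Lean document; each statement's English description precedes it below -/
import Mathlib

section
/- For any Hermitian operator X with Tr X = 1, the generalized robustness r(X) := min{ λ ≥ 0 : (X + λω)/(1+λ) is a density operator for some density operator ω } satisfies 2 r(X) + 1 = ‖X‖₁. -/
open Matrix Kronecker ComplexOrder

/-- Singular values of a square complex matrix. -/
noncomputable def singVals {n : Type*} [Fintype n] [DecidableEq n]
    (X : Matrix n n ℂ) : n → ℝ :=
  fun i => Real.sqrt ((Matrix.isHermitian_mul_conjTranspose_self X).eigenvalues i)

/-- Trace norm (Schatten 1-norm): sum of singular values; for Hermitian `X` this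
is the sum of the absolute values of the eigenvalues. -/
noncomputable def traceNorm {n : Type*} [Fintype n] [DecidableEq n]
    (X : Matrix n n ℂ) : ℝ :=
  ∑ i, singVals X i

/-- Operator norm (Schatten ∞-norm): largest singular value. -/
noncomputable def opNorm {n : Type*} [Fintype n] [DecidableEq n]
    (X : Matrix n n ℂ) : ℝ :=
  ⨆ i, singVals X i

/-- A density operator: positive semidefinite with unit trace. -/
def Density {n : Type*} [Fintype n] (ρ : Matrix n n ℂ) : Prop :=
  ρ.PosSemidef ∧ ρ.trace = 1

/-- Loewner order: `X ⊑ Y` iff `Y - X` is positive semidefinite. -/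
def Loewner {n : Type*} [Fintype n] (X Y : Matrix n n ℂ) : Prop :=
  (Y - X).PosSemidef

/-- Partial trace over the second (B) factor. -/
noncomputable def ptraceB {a b : Type*} [Fintype b] (M : Matrix (a × b) (a × b) ℂ) :
    Matrix a a ℂ :=
  Matrix.of fun i j => ∑ k, M (i, k) (j, k)

/-- Choi matrix of a linear map on matrices. -/
noncomputable def choi {da db : ℕ}
    (Φ : Matrix (Fin da) (Fin da) ℂ →ₗ[ℂ] Matrix (Fin db) (Fin db) ℂ) :
    Matrix (Fin da × Fin db) (Fin da × Fin db) ℂ :=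
  Matrix.of fun p q => Φ (Matrix.single p.1 q.1 1) p.2 q.2

/-- Completely positive and trace non-increasing, via the Choi matrix. -/
def IsCPTNI {da db : ℕ}
    (Φ : Matrix (Fin da) (Fin da) ℂ →ₗ[ℂ] Matrix (Fin db) (Fin db) ℂ) : Prop :=
  (choi Φ).PosSemidef ∧ Loewner (ptraceB (choi Φ)) 1

/-- Completely positive and trace preserving, via the Choi matrix. -/
def IsCPTP {da db : ℕ}
    (Φ : Matrix (Fin da) (Fin da) ℂ →ₗ[ℂ] Matrix (Fin db) (Fin db) ℂ) : Prop :=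
  (choi Φ).PosSemidef ∧ ptraceB (choi Φ) = 1

/-- The map `id_A ⊗ Φ` acting on operators on `A ⊗ A`. -/
noncomputable def idTensor {da db : ℕ}
    (Φ : Matrix (Fin da) (Fin da) ℂ →ₗ[ℂ] Matrix (Fin db) (Fin db) ℂ)
    (M : Matrix (Fin da × Fin da) (Fin da × Fin da) ℂ) :
    Matrix (Fin da × Fin db) (Fin da × Fin db) ℂ :=
  Matrix.of fun p q => Φ (Matrix.of fun k l => M (p.1, k) (q.1, l)) p.2 q.2

/-- Diamond norm: `max_ρ ‖(id ⊗ Φ)(ρ)‖₁` over bipartite density operators. -/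
noncomputable def diamondNorm {da db : ℕ}
    (Φ : Matrix (Fin da) (Fin da) ℂ →ₗ[ℂ] Matrix (Fin db) (Fin db) ℂ) : ℝ :=
  sSup {x : ℝ | ∃ ρ : Matrix (Fin da × Fin da) (Fin da × Fin da) ℂ,
    Density ρ ∧ x = traceNorm (idTensor Φ ρ)}

/-- Base norm with respect to CPTNI maps. -/
noncomputable def cptniNorm {da db : ℕ}
    (Φ : Matrix (Fin da) (Fin da) ℂ →ₗ[ℂ] Matrix (Fin db) (Fin db) ℂ) : ℝ :=
  sInf {s : ℝ | ∃ lp lm : ℝ, ∃ Λp Λm :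
      Matrix (Fin da) (Fin da) ℂ →ₗ[ℂ] Matrix (Fin db) (Fin db) ℂ,
    0 ≤ lp ∧ 0 ≤ lm ∧ IsCPTNI Λp ∧ IsCPTNI Λm ∧
    Φ = (lp : ℂ) • Λp - (lm : ℂ) • Λm ∧ s = lp + lm}

/-- Generalised robustness of a Hermitian unit-trace operator with respect to
all density operators. -/
noncomputable def genRobustness {n : ℕ} (X : Matrix (Fin n) (Fin n) ℂ) : ℝ :=
  sInf {l : ℝ | 0 ≤ l ∧ ∃ ω : Matrix (Fin n) (Fin n) ℂ, Density ω ∧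
    Density ((1 / (1 + l)) • (X + l • ω))}

section helpers
variable {m : Type*} [Fintype m] [DecidableEq m]

lemma auxTraceConj (V M : Matrix m m ℂ) (h : star V * V = 1) :
    (V * M * star V).trace = M.trace := by
  rw [Matrix.trace_mul_cycle, h, one_mul]

lemma auxPsdConj (V : Matrix m m ℂ) (d : m → ℝ) (hd : ∀ i, 0 ≤ d i) :
    (V * Matrix.diagonal (fun i => (d i : ℂ)) * star V).PosSemidef := by
  have h1 : (Matrix.diagonal (fun i => (d i : ℂ))).PosSemidef :=
    Matrix.posSemidef_diagonal_iff.mpr fun i => by exact_mod_cast hd i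
  simpa [Matrix.star_eq_conjTranspose] using h1.mul_mul_conjTranspose_same V

lemma auxPsdSmul {M : Matrix m m ℂ} (hM : M.PosSemidef) {r : ℝ} (hr : 0 ≤ r) :
    (r • M).PosSemidef := by
  have he : r • M = (r : ℂ) • M := by
    ext i j; simp [Complex.real_smul]
  rw [he]
  refine ⟨?_, fun v => ?_⟩
  · show ((r : ℂ) • M)ᴴ = (r : ℂ) • M
    rw [Matrix.conjTranspose_smul, hM.1]
    simp
  · exact (hM.smul (by exact_mod_cast hr : (0:ℂ) ≤ (r:ℂ))).2 v

lemma auxDiagNonneg {M : Matrix m m ℂ} (hM : M.PosSemidef) (i : m) : 0 ≤ M i i := by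
  have := hM.2 (Finsupp.single i 1)
  simpa using this

lemma auxConjMul (V : Matrix m m ℂ) (h : star V * V = 1) (D E : Matrix m m ℂ) :
    (V * D * star V) * (V * E * star V) = V * (D * E) * star V := by
  have h2 : star V * (V * (E * star V)) = E * star V := by
    rw [← mul_assoc, h, one_mul]
  simp only [mul_assoc, h2]

lemma auxConjAdd (V : Matrix m m ℂ) (d e : m → ℝ) :
    V * Matrix.diagonal (fun i => (d i : ℂ)) * star V
      + V * Matrix.diagonal (fun i => (e i : ℂ)) * star V
      = V * Matrix.diagonal (fun i => ((d i + e i : ℝ) : ℂ)) * star V := by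
  have h1 : (Matrix.diagonal fun i => ((d i + e i : ℝ) : ℂ))
      = Matrix.diagonal (fun i => (d i : ℂ)) + Matrix.diagonal (fun i => (e i : ℂ)) := by
    ext i j
    by_cases hij : i = j <;> simp [Matrix.diagonal, hij]
  rw [h1, mul_add, add_mul]

lemma auxTraceConjDiag (V : Matrix m m ℂ) (h : star V * V = 1) (d : m → ℝ) :
    (V * Matrix.diagonal (fun i => (d i : ℂ)) * star V).trace = ((∑ i, d i : ℝ) : ℂ) := by
  rw [auxTraceConj _ _ h, Matrix.trace_diagonal]
  push_cast
  rfl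

end helpers

/-- for Hermitian `X` with `Tr X = 1`, `2 r(X) + 1 = ‖X‖₁`. -/
theorem two_genRobustness_add_one_eq_traceNorm {n : ℕ} (hn : 0 < n)
    (X : Matrix (Fin n) (Fin n) ℂ) (hX : X.IsHermitian) (htr : X.trace = 1) :
    2 * genRobustness X + 1 = traceNorm X := by
  classical
  set V : Matrix (Fin n) (Fin n) ℂ := (hX.eigenvectorUnitary : Matrix (Fin n) (Fin n) ℂ) with hV
  have hV1 : star V * V = 1 := by
    exact Matrix.mem_unitaryGroup_iff'.mp hX.eigenvectorUnitary.2
  have hV2 : V * star V = 1 := by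
    exact Matrix.mem_unitaryGroup_iff.mp hX.eigenvectorUnitary.2
  set lam : Fin n → ℝ := hX.eigenvalues with hlam
  set cd : (Fin n → ℝ) → Matrix (Fin n) (Fin n) ℂ :=
    fun d => V * Matrix.diagonal (fun i => (d i : ℂ)) * star V with hcd
  have hspec : X = cd lam := by
    simpa [hcd, Function.comp_def] using hX.spectral_theorem
  have hsum : ∑ i, lam i = 1 := by
    have h1 : (cd lam).trace = ((∑ i, lam i : ℝ) : ℂ) := auxTraceConjDiag V hV1 lam
    rw [← hspec, htr] at h1
    exact_mod_cast h1.symm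
  set N : ℝ := ∑ i, max (-(lam i)) 0 with hN
  have hN0 : 0 ≤ N := Finset.sum_nonneg fun i _ => le_max_right _ _
  -- trace norm = ∑ |lam i|
  open scoped MatrixOrder in
  have htn : traceNorm X = ∑ i, |lam i| := by
    have hMX : (X * Xᴴ).PosSemidef := Matrix.posSemidef_self_mul_conjTranspose X
    have habsP : (cd (fun i => |lam i|)).PosSemidef :=
      auxPsdConj V _ fun i => abs_nonneg _
    have habs2 : (cd (fun i => |lam i|)) ^ 2 = X * Xᴴ := by
      rw [pow_two, hX.eq, hspec, hcd]
      simp only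
      rw [auxConjMul V hV1, auxConjMul V hV1, Matrix.diagonal_mul_diagonal,
        Matrix.diagonal_mul_diagonal]
      have habssq : (fun i => ((|lam i| : ℝ) : ℂ) * ((|lam i| : ℝ) : ℂ))
          = fun i => ((lam i : ℂ) * (lam i : ℂ)) := by
        ext i
        rw [← Complex.ofReal_mul, ← Complex.ofReal_mul, abs_mul_abs_self]
      rw [habssq]
    have hsqrt : cd (fun i => |lam i|) = CFC.sqrt (X * Xᴴ) := by
      exact ((CFC.sqrt_eq_iff _ _ hMX.nonneg habsP.nonneg).mpr (by rw [← habs2, pow_two])).symm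
    have h1 : (CFC.sqrt (X * Xᴴ)).trace = ((∑ i, Real.sqrt (hMX.1.eigenvalues i) : ℝ) : ℂ) := by
      rw [CFC.sqrt_eq_cfc, cfc_nnreal_eq_real _ (X * Xᴴ) hMX.nonneg, hMX.1.cfc_eq, IsHermitian.cfc,
        Unitary.conjStarAlgAut_apply]
      have hd : (RCLike.ofReal ∘ (fun x : ℝ => ((NNReal.sqrt x.toNNReal : NNReal) : ℝ)) ∘
          hMX.1.eigenvalues : Fin n → ℂ) = fun i => ((Real.sqrt (hMX.1.eigenvalues i) : ℝ) : ℂ) := by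
        ext i; simp [max_eq_left (hMX.eigenvalues_nonneg i)]
      rw [hd]
      exact auxTraceConjDiag _ (Matrix.mem_unitaryGroup_iff'.mp hMX.1.eigenvectorUnitary.2) _
    have h2 : (CFC.sqrt (X * Xᴴ)).trace = ((∑ i, |lam i| : ℝ) : ℂ) := by
      rw [← hsqrt, hcd]
      exact auxTraceConjDiag V hV1 _
    have h3 : ∑ i, Real.sqrt (hMX.1.eigenvalues i) = ∑ i, |lam i| := by
      have := h1.symm.trans h2
      exact_mod_cast this
    have h4 : traceNorm X = ∑ i, Real.sqrt (hMX.1.eigenvalues i) := rfl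
    rw [h4, h3]
  -- genRobustness = N
  have hω'max : ∀ i, max (lam i) 0 = lam i + max (-(lam i)) 0 := by
    intro i
    rcases le_total 0 (lam i) with h | h
    · rw [max_eq_left h, max_eq_right (by linarith)]; ring
    · rw [max_eq_right h, max_eq_left (by linarith)]; ring
  have hgr : genRobustness X = N := by
    rw [genRobustness]
    set S : Set ℝ := {l : ℝ | 0 ≤ l ∧ ∃ ω : Matrix (Fin n) (Fin n) ℂ, Density ω ∧
      Density ((1 / (1 + l)) • (X + l • ω))} with hS
    have hmem : N ∈ S := by
      by_cases hc : ∀ i, 0 ≤ lam i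
      · have hNz : N = 0 := by
          rw [hN]
          apply Finset.sum_eq_zero
          intro i _
          exact max_eq_right (neg_nonpos.mpr (hc i))
        refine ⟨hN0, ((n : ℝ)⁻¹) • (1 : Matrix (Fin n) (Fin n) ℂ), ⟨?_, ?_⟩, ?_⟩
        · exact auxPsdSmul Matrix.PosSemidef.one (by positivity)
        · rw [Matrix.trace_smul, Matrix.trace_one]
          simp only [Fintype.card_fin, Complex.real_smul]
          rw [← Complex.ofReal_natCast, ← Complex.ofReal_mul,
            inv_mul_cancel₀ (by exact_mod_cast hn.ne')]
          norm_num
        · rw [hNz]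
          have hXeq : (1 / (1 + (0:ℝ))) • (X + (0:ℝ) • ((n : ℝ)⁻¹ • (1 : Matrix (Fin n) (Fin n) ℂ))) = X := by
            simp
          rw [hXeq]
          refine ⟨?_, htr⟩
          rw [hspec]
          exact auxPsdConj V lam hc
      · push_neg at hc
        obtain ⟨i0, hi0⟩ := hc
        have hNpos : 0 < N := by
          have h1 : 0 < max (-(lam i0)) 0 := lt_max_of_lt_left (by linarith)
          have h2 : max (-(lam i0)) 0 ≤ N := by
            rw [hN]
            exact Finset.single_le_sum (f := fun i => max (-(lam i)) 0) (fun i _ => le_max_right _ _) (Finset.mem_univ i0)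
          linarith
        refine ⟨hN0, N⁻¹ • cd (fun i => max (-(lam i)) 0), ⟨?_, ?_⟩, ?_, ?_⟩
        · exact auxPsdSmul (auxPsdConj V _ fun i => le_max_right _ _) (by positivity)
        · rw [Matrix.trace_smul, hcd]
          simp only
          rw [auxTraceConjDiag V hV1, ← hN, Complex.real_smul, ← Complex.ofReal_mul,
            inv_mul_cancel₀ hNpos.ne']
          norm_num
        · -- PosSemidef of the mixture
          have hXN : X + N • (N⁻¹ • cd (fun i => max (-(lam i)) 0)) = cd (fun i => max (lam i) 0) := by
            rw [smul_smul, mul_inv_cancel₀ hNpos.ne', one_smul, hspec, hcd]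
            simp only
            rw [auxConjAdd V]
            have hfun : (fun i => ((lam i + max (-(lam i)) 0 : ℝ) : ℂ))
                = fun i => ((max (lam i) 0 : ℝ) : ℂ) := by
              ext i; rw [← hω'max i]
            rw [hfun]
          rw [hXN]
          exact auxPsdSmul (auxPsdConj V _ fun i => le_max_right _ _) (by positivity)
        · have hXN : X + N • (N⁻¹ • cd (fun i => max (-(lam i)) 0)) = cd (fun i => max (lam i) 0) := by
            rw [smul_smul, mul_inv_cancel₀ hNpos.ne', one_smul, hspec, hcd]
            simp only
            rw [auxConjAdd V]
            have hfun : (fun i => ((lam i + max (-(lam i)) 0 : ℝ) : ℂ))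
                = fun i => ((max (lam i) 0 : ℝ) : ℂ) := by
              ext i; rw [← hω'max i]
            rw [hfun]
          rw [hXN, Matrix.trace_smul, hcd]
          simp only
          rw [auxTraceConjDiag V hV1]
          have hsmax : ∑ i, max (lam i) 0 = 1 + N := by
            simp_rw [hω'max]
            rw [Finset.sum_add_distrib, hsum, ← hN]
          rw [hsmax, Complex.real_smul, ← Complex.ofReal_mul,
            one_div_mul_cancel (by positivity : (1:ℝ) + N ≠ 0)]
          norm_num
    have hlb : ∀ l ∈ S, N ≤ l := by
      rintro l ⟨hl0, ω, ⟨hωP, hωtr⟩, hρP, hρtr⟩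
      have h1l : (0:ℝ) < 1 + l := by linarith
      have hXl : (X + l • ω).PosSemidef := by
        have h := auxPsdSmul hρP h1l.le
        rwa [smul_smul, mul_one_div, div_self h1l.ne', one_smul] at h
      set ω' : Matrix (Fin n) (Fin n) ℂ := star V * ω * V with hω'
      have hω'P : ω'.PosSemidef := by
        have := hωP.mul_mul_conjTranspose_same (star V)
        simpa [hω', Matrix.star_eq_conjTranspose] using this
      have hYP : (star V * (X + l • ω) * V).PosSemidef := by
        have := hXl.mul_mul_conjTranspose_same (star V)
        simpa [Matrix.star_eq_conjTranspose] using this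
      have hdiag : star V * X * V = Matrix.diagonal (fun i => (lam i : ℂ)) := by
        rw [hspec, hcd]
        simp only [mul_assoc, hV1, mul_one]
        rw [← mul_assoc, hV1, one_mul]
      have hsplit : star V * (X + l • ω) * V
          = Matrix.diagonal (fun i => (lam i : ℂ)) + l • ω' := by
        rw [mul_add, add_mul, hdiag, hω', Matrix.mul_smul, Matrix.smul_mul]
      have key : ∀ i, 0 ≤ lam i + l * (ω' i i).re := by
        intro i
        have h0 := auxDiagNonneg hYP i
        rw [hsplit] at h0
        have h0' := (Complex.le_def.mp h0).1
        simpa [Matrix.add_apply, Matrix.smul_apply, Matrix.diagonal_apply_eq,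
          Complex.real_smul] using h0'
      have hωd : ∀ i, 0 ≤ (ω' i i).re := fun i => (Complex.le_def.mp (auxDiagNonneg hω'P i)).1
      have hsumd : ∑ i, (ω' i i).re = 1 := by
        have h1 : ω'.trace = ω.trace := by
          rw [hω', Matrix.trace_mul_cycle, hV2, one_mul]
        have h2 := congrArg Complex.re (h1.trans hωtr)
        simpa [Matrix.trace, Matrix.diag, Complex.re_sum] using h2
      calc N = ∑ i, max (-(lam i)) 0 := hN
        _ ≤ ∑ i, l * (ω' i i).re := by
            refine Finset.sum_le_sum fun i _ => ?_
            apply max_le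
            · linarith [key i]
            · exact mul_nonneg hl0 (hωd i)
        _ = l * ∑ i, (ω' i i).re := by rw [Finset.mul_sum]
        _ = l := by rw [hsumd, mul_one]
    exact le_antisymm (csInf_le ⟨0, fun l hl => hl.1⟩ hmem) (le_csInf ⟨N, hmem⟩ hlb)
  have habs : ∑ i, |lam i| = 1 + 2 * N := by
    have : ∀ i, |lam i| = lam i + 2 * max (-(lam i)) 0 := by
      intro i
      rcases le_total 0 (lam i) with h | h
      · rw [abs_of_nonneg h, max_eq_right (by linarith)]; ring
      · rw [abs_of_nonpos h, max_eq_left (by linarith)]; ring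
    rw [htn] at *
    simp_rw [this]
    rw [Finset.sum_add_distrib, hsum, ← Finset.mul_sum, ← hN]
  rw [hgr, htn, habs]
  ring
end

section
/- For any Hermiticity-preserving map Φ, writing J_Φ = (J_Φ)₊ − (J_Φ)₋ for the Jordan decomposition of the Choi matrix into positive and negative parts, the base norm with respect to CPTNI maps satisfies (1/d_A)‖J_Φ‖₁ ≤ ‖Φ‖_CPTNI ≤ ‖J_Φ‖₁. -/
open Matrix Kronecker ComplexOrder

namespace CPTNIAux

section Herm
variable {m : Type*} [Fintype m] [DecidableEq m]

lemma trace_unitary_conj (U : Matrix.unitaryGroup m ℂ) (D : Matrix m m ℂ) :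
    ((U : Matrix m m ℂ) * D * star (U : Matrix m m ℂ)).trace = D.trace := by
  have h : star (U : Matrix m m ℂ) * (U : Matrix m m ℂ) = 1 :=
    Matrix.mem_unitaryGroup_iff'.mp U.2
  rw [Matrix.trace_mul_cycle, h, Matrix.one_mul]

/-- Functional calculus for a Hermitian matrix via its eigendecomposition. -/
noncomputable def fc {A : Matrix m m ℂ} (hA : A.IsHermitian) (f : ℝ → ℝ) : Matrix m m ℂ :=
  (hA.eigenvectorUnitary : Matrix m m ℂ) *
    Matrix.diagonal (fun i => ((f (hA.eigenvalues i) : ℝ) : ℂ)) *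
    star (hA.eigenvectorUnitary : Matrix m m ℂ)

lemma fc_trace {A : Matrix m m ℂ} (hA : A.IsHermitian) (f : ℝ → ℝ) :
    (fc hA f).trace = ∑ i, ((f (hA.eigenvalues i) : ℝ) : ℂ) := by
  rw [fc, trace_unitary_conj, Matrix.trace_diagonal]

lemma fc_mul {A : Matrix m m ℂ} (hA : A.IsHermitian) (f g : ℝ → ℝ) :
    fc hA f * fc hA g = fc hA (fun x => f x * g x) := by
  have h : star (hA.eigenvectorUnitary : Matrix m m ℂ) * (hA.eigenvectorUnitary : Matrix m m ℂ)
      = 1 := Matrix.mem_unitaryGroup_iff'.mp hA.eigenvectorUnitary.2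
  rw [fc, fc, fc]
  simp only [Matrix.mul_assoc]
  rw [← Matrix.mul_assoc (star _) _ _, h, Matrix.one_mul,
    ← Matrix.mul_assoc (Matrix.diagonal _) (Matrix.diagonal _), Matrix.diagonal_mul_diagonal]
  push_cast
  rfl

lemma fc_add {A : Matrix m m ℂ} (hA : A.IsHermitian) (f g : ℝ → ℝ) :
    fc hA f + fc hA g = fc hA (fun x => f x + g x) := by
  rw [fc, fc, fc, ← Matrix.add_mul, ← Matrix.mul_add, Matrix.diagonal_add]
  push_cast
  rfl

lemma fc_sub {A : Matrix m m ℂ} (hA : A.IsHermitian) (f g : ℝ → ℝ) :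
    fc hA f - fc hA g = fc hA (fun x => f x - g x) := by
  rw [fc, fc, fc, ← Matrix.sub_mul, ← Matrix.mul_sub, Matrix.diagonal_sub]
  push_cast
  rfl

lemma fc_id {A : Matrix m m ℂ} (hA : A.IsHermitian) :
    fc hA (fun x => x) = A := by
  rw [fc]; exact hA.spectral_theorem.symm

lemma fc_const {A : Matrix m m ℂ} (hA : A.IsHermitian) (c : ℝ) :
    fc hA (fun _ => c) = (c : ℂ) • 1 := by
  have h : (hA.eigenvectorUnitary : Matrix m m ℂ) * star (hA.eigenvectorUnitary : Matrix m m ℂ)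
      = 1 := Matrix.mem_unitaryGroup_iff.mp hA.eigenvectorUnitary.2
  rw [fc]
  have hd : Matrix.diagonal (fun _ : m => ((c : ℝ) : ℂ)) = (c : ℂ) • 1 := by
    rw [Matrix.smul_one_eq_diagonal]
  rw [hd, Matrix.mul_smul, Matrix.smul_mul, Matrix.mul_one, h]

lemma fc_posSemidef {A : Matrix m m ℂ} (hA : A.IsHermitian) (f : ℝ → ℝ)
    (hf : ∀ i, 0 ≤ f (hA.eigenvalues i)) : (fc hA f).PosSemidef := by
  rw [fc]
  have hd : (Matrix.diagonal (fun i => ((f (hA.eigenvalues i) : ℝ) : ℂ))).PosSemidef := by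
    refine Matrix.posSemidef_diagonal_iff.mpr fun i => ?_
    exact_mod_cast hf i
  simpa [Matrix.star_eq_conjTranspose] using hd.mul_mul_conjTranspose_same
    (hA.eigenvectorUnitary : Matrix m m ℂ)


lemma psd_diag_nonneg {M : Matrix m m ℂ} (hM : M.PosSemidef) (i : m) : 0 ≤ M i i := by
  exact hM.diag_nonneg

lemma psd_trace_nonneg {M : Matrix m m ℂ} (hM : M.PosSemidef) : 0 ≤ M.trace := by
  rw [Matrix.trace]
  exact Finset.sum_nonneg fun i _ => psd_diag_nonneg hM i

open scoped MatrixOrder in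
lemma psd_trace_mul_nonneg {M N : Matrix m m ℂ} (hM : M.PosSemidef) (hN : N.PosSemidef) :
    0 ≤ (M * N).trace := by
  have h1 : M * N = CFC.sqrt M * CFC.sqrt M * N := by rw [CFC.sqrt_mul_sqrt_self M hM.nonneg]
  rw [h1, Matrix.mul_assoc, Matrix.trace_mul_comm]
  have h2 : (CFC.sqrt M * N * CFC.sqrt M).PosSemidef := by
    have := hN.mul_mul_conjTranspose_same (CFC.sqrt M)
    rwa [(CFC.sqrt_nonneg M).posSemidef.isHermitian.eq] at this
  exact psd_trace_nonneg h2

omit [DecidableEq m] in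
lemma psd_smul {M : Matrix m m ℂ} (hM : M.PosSemidef) {c : ℝ} (hc : 0 ≤ c) :
    ((c : ℂ) • M).PosSemidef := by
  constructor
  · rw [Matrix.IsHermitian, Matrix.conjTranspose_smul, hM.isHermitian.eq]
    congr 1
    simp
  · exact (hM.smul (a := (c : ℂ)) (by exact_mod_cast hc)).2


lemma trace_eq_sum_eigenvalues {A : Matrix m m ℂ} (hA : A.IsHermitian) :
    A.trace = ∑ i, ((hA.eigenvalues i : ℝ) : ℂ) := by
  conv_lhs => rw [← fc_id hA]
  exact fc_trace hA _

open scoped MatrixOrder in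
/-- `traceNorm` of a Hermitian matrix is the sum of the absolute values of eigenvalues. -/
lemma traceNorm_hermitian {A : Matrix m m ℂ} (hA : A.IsHermitian) :
    traceNorm A = ∑ i, |hA.eigenvalues i| := by
  have hP : (A * Aᴴ).PosSemidef := Matrix.posSemidef_self_mul_conjTranspose A
  have habs : (fc hA (fun x => |x|)).PosSemidef :=
    fc_posSemidef hA _ (fun i => abs_nonneg _)
  have hsq : (fc hA (fun x => |x|)) ^ 2 = A * Aᴴ := by
    rw [pow_two, fc_mul]
    have : (fun x => |x| * |x|) = (fun x : ℝ => x * x) := by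
      funext x; exact abs_mul_abs_self x
    rw [this, ← fc_mul hA (fun x => x) (fun x => x), fc_id, hA.eq]
  have hsq2 : fc hP.1 Real.sqrt * fc hP.1 Real.sqrt = A * Aᴴ := by
    rw [fc_mul]
    have : fc hP.1 (fun x => Real.sqrt x * Real.sqrt x) = fc hP.1 (fun x => x) := by
      simp only [fc]
      congr 3
      funext i
      rw [Real.mul_self_sqrt (hP.eigenvalues_nonneg i)]
    rw [this, fc_id]
  have heq : fc hA (fun x => |x|) = fc hP.1 Real.sqrt := by
    have e1 := CFC.sqrt_unique (a := A * Aᴴ) (b := fc hA (fun x => |x|))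
      (by rw [← pow_two]; exact hsq) habs.nonneg
    have e2 := CFC.sqrt_unique (a := A * Aᴴ) (b := fc hP.1 Real.sqrt) hsq2
      (fc_posSemidef hP.1 _ fun i => Real.sqrt_nonneg _).nonneg
    rw [← e1, e2]
  have h1 : (fc hP.1 Real.sqrt).trace = ∑ i, ((Real.sqrt (hP.1.eigenvalues i) : ℝ) : ℂ) :=
    fc_trace hP.1 _
  have h2 : (fc hA (fun x => |x|)).trace = ∑ i, ((|hA.eigenvalues i| : ℝ) : ℂ) :=
    fc_trace hA _
  have h3 : (∑ i, ((Real.sqrt (hP.1.eigenvalues i) : ℝ) : ℂ))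
      = ∑ i, ((|hA.eigenvalues i| : ℝ) : ℂ) := by rw [← h1, ← heq, h2]
  have h4 : (∑ i, Real.sqrt (hP.1.eigenvalues i)) = ∑ i, |hA.eigenvalues i| := by
    exact_mod_cast h3
  rw [traceNorm, ← h4]
  rfl


lemma fc_smul {A : Matrix m m ℂ} (hA : A.IsHermitian) (c : ℝ) (f : ℝ → ℝ) :
    ((c : ℝ) : ℂ) • fc hA f = fc hA (fun x => c * f x) := by
  have hd : Matrix.diagonal (fun i => ((c * f (hA.eigenvalues i) : ℝ) : ℂ))
      = (c : ℂ) • Matrix.diagonal (fun i => ((f (hA.eigenvalues i) : ℝ) : ℂ)) := by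
    ext i j
    rcases eq_or_ne i j with rfl | h
    · push_cast [Matrix.diagonal_apply_eq, Matrix.smul_apply]
      rfl
    · simp [Matrix.diagonal_apply_ne _ h]
  rw [fc, fc, hd, Matrix.mul_smul, Matrix.smul_mul]

lemma fc_eq_zero {A : Matrix m m ℂ} (hA : A.IsHermitian) (f : ℝ → ℝ)
    (hf : ∀ i, f (hA.eigenvalues i) = 0) : fc hA f = 0 := by
  rw [fc]
  have : Matrix.diagonal (fun i => ((f (hA.eigenvalues i) : ℝ) : ℂ)) = 0 := by
    rw [show (fun i => ((f (hA.eigenvalues i) : ℝ) : ℂ)) = fun _ => 0 by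
      funext i; rw [hf i]; norm_num]
    exact Matrix.diagonal_zero
  rw [this, Matrix.mul_zero, Matrix.zero_mul]

/-- Triangle-type bound: if Hermitian `X = A - B` with `A, B` PSD, then
`∑ |eigenvalues X| ≤ re (Tr A) + re (Tr B)`. -/
lemma sum_abs_eigenvalues_le {X A B : Matrix m m ℂ} (hX : X.IsHermitian)
    (hA : A.PosSemidef) (hB : B.PosSemidef) (hAB : X = A - B) :
    ∑ i, |hX.eigenvalues i| ≤ (A.trace).re + (B.trace).re := by
  set T : Matrix m m ℂ := fc hX (fun x => if 0 ≤ x then 1 else -1) with hT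
  have hTX : (T * X).trace = ((∑ i, |hX.eigenvalues i| : ℝ) : ℂ) := by
    conv_lhs => rw [show X = fc hX (fun x => x) from (fc_id hX).symm]
    rw [hT, fc_mul, fc_trace]
    have habs : ∀ i, (if 0 ≤ hX.eigenvalues i then (1:ℝ) else -1) * hX.eigenvalues i
        = |hX.eigenvalues i| := by
      intro i
      rcases le_or_gt 0 (hX.eigenvalues i) with h | h
      · rw [if_pos h, one_mul, abs_of_nonneg h]
      · rw [if_neg (not_le.mpr h), neg_one_mul, abs_of_neg h]
    simp_rw [habs]
    push_cast
    rfl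
  have honeSubT : (1 - T).PosSemidef := by
    rw [show (1 : Matrix m m ℂ) = fc hX (fun _ => 1) by rw [fc_const]; simp, hT, fc_sub]
    refine fc_posSemidef hX _ fun i => ?_
    rcases le_or_gt 0 (hX.eigenvalues i) with h | h
    · simp [h]
    · simp [not_le.mpr h]
  have honeAddT : (1 + T).PosSemidef := by
    rw [show (1 : Matrix m m ℂ) = fc hX (fun _ => 1) by rw [fc_const]; simp, hT, fc_add]
    refine fc_posSemidef hX _ fun i => ?_
    rcases le_or_gt 0 (hX.eigenvalues i) with h | h
    · simp [h]
    · norm_num [not_le.mpr h]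
  have h1 : (T * A).trace ≤ A.trace := by
    have := psd_trace_mul_nonneg honeSubT hA
    rw [Matrix.sub_mul, Matrix.one_mul, Matrix.trace_sub, sub_nonneg] at this
    exact this
  have h2 : -(T * B).trace ≤ B.trace := by
    have := psd_trace_mul_nonneg honeAddT hB
    rw [Matrix.add_mul, Matrix.one_mul, Matrix.trace_add] at this
    rw [← sub_nonneg, sub_neg_eq_add]
    rw [add_comm] at this ⊢
    exact this
  have hsplit : (T * X).trace = (T * A).trace - (T * B).trace := by
    rw [hAB, Matrix.mul_sub, Matrix.trace_sub]
  have hle : ((∑ i, |hX.eigenvalues i| : ℝ) : ℂ) ≤ A.trace + B.trace := by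
    rw [← hTX, hsplit, sub_eq_add_neg]
    exact add_le_add h1 h2
  have hre := (Complex.le_def.mp hle).1
  rw [Complex.ofReal_re, Complex.add_re] at hre
  exact hre


lemma eigenvalue_le_re_trace {N : Matrix m m ℂ} (hN : N.PosSemidef) (i : m) :
    hN.1.eigenvalues i ≤ (N.trace).re := by
  have h := trace_eq_sum_eigenvalues hN.1
  have hre : (N.trace).re = ∑ j, hN.1.eigenvalues j := by
    rw [h, ← Complex.ofReal_sum, Complex.ofReal_re]
  rw [hre]
  exact Finset.single_le_sum (fun j _ => hN.eigenvalues_nonneg j) (Finset.mem_univ i)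

lemma psd_re_trace_nonneg {N : Matrix m m ℂ} (hN : N.PosSemidef) : 0 ≤ (N.trace).re :=
  (Complex.le_def.mp (psd_trace_nonneg hN)).1

lemma psd_eq_zero_of_trace_zero {N : Matrix m m ℂ} (hN : N.PosSemidef)
    (h : N.trace = 0) : N = 0 := by
  have h2 : ∑ j, hN.1.eigenvalues j = 0 := by
    have := trace_eq_sum_eigenvalues hN.1
    rw [h] at this
    exact_mod_cast this.symm
  have h3 : ∀ j ∈ Finset.univ, hN.1.eigenvalues j = 0 :=
    (Finset.sum_eq_zero_iff_of_nonneg (fun j _ => hN.eigenvalues_nonneg j)).mp h2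
  have h4 : N = fc hN.1 (fun x => x) := (fc_id hN.1).symm
  rw [h4]
  exact fc_eq_zero hN.1 _ (fun j => h3 j (Finset.mem_univ j))

/-- If `N` is PSD with real trace `t`, then `1 - t⁻¹ • N` is PSD. -/
lemma one_sub_inv_smul_psd {N : Matrix m m ℂ} (hN : N.PosSemidef) {t : ℝ}
    (ht : N.trace = (t : ℂ)) : ((1 : Matrix m m ℂ) - ((t⁻¹ : ℝ) : ℂ) • N).PosSemidef := by
  rcases eq_or_ne t 0 with rfl | htne
  · have : N = 0 := psd_eq_zero_of_trace_zero hN (by simpa using ht)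
    rw [this]
    simpa using Matrix.PosSemidef.one (n := m) (R := ℂ)
  · have ht0 : 0 ≤ t := by
      have := psd_re_trace_nonneg hN
      rwa [ht, Complex.ofReal_re] at this
    have htpos : 0 < t := lt_of_le_of_ne ht0 (Ne.symm htne)
    have h1 : (1 : Matrix m m ℂ) = fc hN.1 (fun _ => 1) := by rw [fc_const]; simp
    have h2 : ((t⁻¹ : ℝ) : ℂ) • N = fc hN.1 (fun x => t⁻¹ * x) := by
      conv_lhs => rw [show N = fc hN.1 (fun x => x) from (fc_id hN.1).symm]
      rw [fc_smul]
    rw [h1, h2, fc_sub]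
    refine fc_posSemidef hN.1 _ fun i => ?_
    have hle : hN.1.eigenvalues i ≤ t := by
      have := eigenvalue_le_re_trace hN i
      rwa [ht, Complex.ofReal_re] at this
    rw [sub_nonneg]
    calc t⁻¹ * hN.1.eigenvalues i ≤ t⁻¹ * t :=
          mul_le_mul_of_nonneg_left hle (inv_nonneg.mpr ht0)
      _ = 1 := inv_mul_cancel₀ htne

end Herm

section PT
variable {a b : Type*} [Fintype a] [Fintype b]

omit [Fintype a] in
lemma ptraceB_eq_sum_submatrix (M : Matrix (a × b) (a × b) ℂ) :
    ptraceB M = ∑ k, M.submatrix (fun i => (i, k)) (fun j => (j, k)) := by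
  ext i j
  simp [ptraceB, Matrix.sum_apply]

lemma ptraceB_trace (M : Matrix (a × b) (a × b) ℂ) : (ptraceB M).trace = M.trace := by
  simp only [Matrix.trace, ptraceB, Matrix.diag_apply, Matrix.of_apply]
  rw [← Finset.sum_product']
  rfl

omit [Fintype a] in
lemma ptraceB_smul (c : ℂ) (M : Matrix (a × b) (a × b) ℂ) :
    ptraceB (c • M) = c • ptraceB M := by
  ext i j
  simp [ptraceB, Finset.mul_sum]

lemma ptraceB_posSemidef [DecidableEq a] {M : Matrix (a × b) (a × b) ℂ} (hM : M.PosSemidef) :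
    (ptraceB M).PosSemidef := by
  rw [ptraceB_eq_sum_submatrix]
  refine Finset.sum_induction _ _ (fun A B hA hB => hA.add hB) Matrix.PosSemidef.zero ?_
  exact fun k _ => hM.submatrix _


end PT

section Choi
variable {da db : ℕ}

noncomputable def mapOfChoi (J : Matrix (Fin da × Fin db) (Fin da × Fin db) ℂ) :
    Matrix (Fin da) (Fin da) ℂ →ₗ[ℂ] Matrix (Fin db) (Fin db) ℂ where
  toFun X := Matrix.of fun i j => ∑ k, ∑ l, X k l * J (k, i) (l, j)
  map_add' X Y := by
    ext i j
    simp [add_mul, Finset.sum_add_distrib]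
  map_smul' c X := by
    ext i j
    simp [Finset.mul_sum, mul_assoc]

lemma choi_mapOfChoi (J : Matrix (Fin da × Fin db) (Fin da × Fin db) ℂ) :
    choi (mapOfChoi J) = J := by
  ext ⟨p1, p2⟩ ⟨q1, q2⟩
  simp [choi, mapOfChoi, Matrix.single, ite_and, Finset.sum_ite_eq,
    Finset.sum_ite_eq']

lemma mapOfChoi_choi (Φ : Matrix (Fin da) (Fin da) ℂ →ₗ[ℂ] Matrix (Fin db) (Fin db) ℂ) :
    mapOfChoi (choi Φ) = Φ := by
  refine LinearMap.ext fun X => ?_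
  ext i j
  conv_rhs => rw [Matrix.matrix_eq_sum_single X]
  rw [map_sum]
  simp only [mapOfChoi, choi, LinearMap.coe_mk, AddHom.coe_mk, Matrix.of_apply,
    Matrix.sum_apply, map_sum]
  refine Finset.sum_congr rfl fun k _ => ?_
  refine Finset.sum_congr rfl fun l _ => ?_
  have : Matrix.single k l (X k l) = X k l • Matrix.single k l 1 := by
    rw [Matrix.smul_single, smul_eq_mul, mul_one]
  rw [this, _root_.map_smul]
  simp

lemma choi_smul (c : ℂ) (Φ : Matrix (Fin da) (Fin da) ℂ →ₗ[ℂ] Matrix (Fin db) (Fin db) ℂ) :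
    choi (c • Φ) = c • choi Φ := by
  ext p q
  simp [choi]

lemma choi_sub (Φ Ψ : Matrix (Fin da) (Fin da) ℂ →ₗ[ℂ] Matrix (Fin db) (Fin db) ℂ) :
    choi (Φ - Ψ) = choi Φ - choi Ψ := by
  ext p q
  simp [choi]

lemma mapOfChoi_smul (c : ℂ) (J : Matrix (Fin da × Fin db) (Fin da × Fin db) ℂ) :
    mapOfChoi (c • J) = c • mapOfChoi J := by
  refine LinearMap.ext fun X => ?_
  ext i j
  simp [mapOfChoi, Finset.mul_sum, mul_left_comm]

lemma mapOfChoi_sub (J K : Matrix (Fin da × Fin db) (Fin da × Fin db) ℂ) :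
    mapOfChoi (J - K) = mapOfChoi J - mapOfChoi K := by
  refine LinearMap.ext fun X => ?_
  ext i j
  simp [mapOfChoi, mul_sub, Finset.sum_sub_distrib]


/-- Rescaling a PSD matrix with real trace `t` by `t⁻¹` gives a CPTNI map. -/
lemma isCPTNI_mapOfChoi_inv_smul {X : Matrix (Fin da × Fin db) (Fin da × Fin db) ℂ}
    (hX : X.PosSemidef) {t : ℝ} (ht : X.trace = (t : ℂ)) :
    IsCPTNI (mapOfChoi (((t⁻¹ : ℝ) : ℂ) • X)) := by
  have ht0 : 0 ≤ t := by
    have := psd_re_trace_nonneg hX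
    rwa [ht, Complex.ofReal_re] at this
  have hchoi : choi (mapOfChoi (((t⁻¹ : ℝ) : ℂ) • X)) = ((t⁻¹ : ℝ) : ℂ) • X :=
    choi_mapOfChoi _
  constructor
  · rw [hchoi]
    exact psd_smul hX (inv_nonneg.mpr ht0)
  · show (1 - ptraceB (choi (mapOfChoi (((t⁻¹ : ℝ) : ℂ) • X)))).PosSemidef
    rw [hchoi, ptraceB_smul]
    exact one_sub_inv_smul_psd (ptraceB_posSemidef hX) (by rw [ptraceB_trace, ht])

end Choi

end CPTNIAux

/-- `(1/d_A) ‖J_Φ‖₁ ≤ ‖Φ‖_CPTNI ≤ ‖J_Φ‖₁`. -/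
theorem cptniNorm_traceNorm_bounds {da db : ℕ} (hda : 0 < da)
    (Φ : Matrix (Fin da) (Fin da) ℂ →ₗ[ℂ] Matrix (Fin db) (Fin db) ℂ) (hH : (choi Φ).IsHermitian) :
    (1 / (da : ℝ)) * traceNorm (choi Φ) ≤ cptniNorm Φ ∧
    cptniNorm Φ ≤ traceNorm (choi Φ) := by
  classical
  open CPTNIAux in
  set J := choi Φ with hJ
  set lam := hH.eigenvalues with hlam
  set lp : ℝ := ∑ i, max (lam i) 0 with hlp
  set lm : ℝ := ∑ i, max (-(lam i)) 0 with hlm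
  have hlp0 : 0 ≤ lp := Finset.sum_nonneg fun i _ => le_max_right _ _
  have hlm0 : 0 ≤ lm := Finset.sum_nonneg fun i _ => le_max_right _ _
  set Xp := fc hH (fun x => max x 0) with hXp
  set Xm := fc hH (fun x => max (-x) 0) with hXm
  have hXpPSD : Xp.PosSemidef := fc_posSemidef hH _ fun i => le_max_right _ _
  have hXmPSD : Xm.PosSemidef := fc_posSemidef hH _ fun i => le_max_right _ _
  have hXsub : Xp - Xm = J := by
    rw [hXp, hXm, fc_sub]
    have hfun : (fun x : ℝ => max x 0 - max (-x) 0) = fun x : ℝ => x := by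
      funext x
      rcases le_total 0 x with h | h
      · rw [max_eq_left h, max_eq_right (neg_nonpos_of_nonneg h), sub_zero]
      · rw [max_eq_right h, max_eq_left (neg_nonneg_of_nonpos h), zero_sub, neg_neg]
    rw [hfun, fc_id]
  have hXptr : Xp.trace = ((lp : ℝ) : ℂ) := by
    rw [hXp, fc_trace, hlp]
    push_cast
    rfl
  have hXmtr : Xm.trace = ((lm : ℝ) : ℂ) := by
    rw [hXm, fc_trace, hlm]
    push_cast
    rfl
  have htn : traceNorm J = lp + lm := by
    rw [traceNorm_hermitian hH, hlp, hlm, ← Finset.sum_add_distrib]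
    refine Finset.sum_congr rfl fun i _ => ?_
    rw [← hlam]
    rcases le_total 0 (lam i) with h | h
    · rw [abs_of_nonneg h, max_eq_left h, max_eq_right (neg_nonpos_of_nonneg h), add_zero]
    · rw [abs_of_nonpos h, max_eq_right h, max_eq_left (neg_nonneg_of_nonpos h), zero_add]
  -- the explicit CPTNI decomposition
  set Λp := mapOfChoi (((lp⁻¹ : ℝ) : ℂ) • Xp) with hΛp
  set Λm := mapOfChoi (((lm⁻¹ : ℝ) : ℂ) • Xm) with hΛm
  have hCPTNIp : IsCPTNI Λp := isCPTNI_mapOfChoi_inv_smul hXpPSD hXptr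
  have hCPTNIm : IsCPTNI Λm := isCPTNI_mapOfChoi_inv_smul hXmPSD hXmtr
  have hcancel : ∀ (c : ℝ) (M : Matrix (Fin da × Fin db) (Fin da × Fin db) ℂ),
      0 ≤ c → (c = 0 → M = 0) → (c : ℂ) • ((c⁻¹ : ℝ) : ℂ) • M = M := by
    intro c M _ h0
    rcases eq_or_ne c 0 with rfl | hc
    · rw [h0 rfl]
      simp
    · rw [smul_smul]
      have : ((c : ℝ) : ℂ) * ((c⁻¹ : ℝ) : ℂ) = 1 := by
        push_cast
        field_simp
      rw [this, one_smul]
  have hXpzero : lp = 0 → Xp = 0 := by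
    intro h
    refine fc_eq_zero hH _ fun i => ?_
    have := (Finset.sum_eq_zero_iff_of_nonneg
      (fun j (_ : j ∈ Finset.univ) => le_max_right (lam j) 0)).mp (by rw [← hlp, h])
    exact this i (Finset.mem_univ i)
  have hXmzero : lm = 0 → Xm = 0 := by
    intro h
    refine fc_eq_zero hH _ fun i => ?_
    have := (Finset.sum_eq_zero_iff_of_nonneg
      (fun j (_ : j ∈ Finset.univ) => le_max_right (-(lam j)) 0)).mp (by rw [← hlm, h])
    exact this i (Finset.mem_univ i)
  have hPhiEq : Φ = (lp : ℂ) • Λp - (lm : ℂ) • Λm := by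
    rw [hΛp, hΛm, ← mapOfChoi_smul, ← mapOfChoi_smul, ← mapOfChoi_sub,
      hcancel lp Xp hlp0 hXpzero, hcancel lm Xm hlm0 hXmzero, hXsub, hJ]
    exact (mapOfChoi_choi Φ).symm
  set S := {s : ℝ | ∃ lp lm : ℝ, ∃ Λp Λm :
      Matrix (Fin da) (Fin da) ℂ →ₗ[ℂ] Matrix (Fin db) (Fin db) ℂ,
    0 ≤ lp ∧ 0 ≤ lm ∧ IsCPTNI Λp ∧ IsCPTNI Λm ∧
    Φ = (lp : ℂ) • Λp - (lm : ℂ) • Λm ∧ s = lp + lm} with hS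
  have hmem : (lp + lm) ∈ S :=
    ⟨lp, lm, Λp, Λm, hlp0, hlm0, hCPTNIp, hCPTNIm, hPhiEq, rfl⟩
  have hbdd : BddBelow S := by
    refine ⟨0, fun s hs => ?_⟩
    obtain ⟨l1, l2, _, _, h1, h2, _, _, _, h6⟩ := hs
    rw [h6]
    linarith
  have hCN : cptniNorm Φ = sInf S := rfl
  constructor
  · -- lower bound
    rw [hCN]
    refine le_csInf ⟨lp + lm, hmem⟩ fun s hs => ?_
    obtain ⟨l1, l2, Λ1, Λ2, h1, h2, ⟨hP1, hL1⟩, ⟨hP2, hL2⟩, h5, rfl⟩ := hs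
    have hJeq : J = (l1 : ℂ) • choi Λ1 - (l2 : ℂ) • choi Λ2 := by
      rw [hJ, h5, choi_sub, choi_smul, choi_smul]
    have hA : ((l1 : ℂ) • choi Λ1).PosSemidef := psd_smul hP1 h1
    have hB : ((l2 : ℂ) • choi Λ2).PosSemidef := psd_smul hP2 h2
    have htri := sum_abs_eigenvalues_le hH hA hB hJeq
    have hreTr : ∀ (Λ : Matrix (Fin da) (Fin da) ℂ →ₗ[ℂ] Matrix (Fin db) (Fin db) ℂ),
        (choi Λ).PosSemidef → Loewner (ptraceB (choi Λ)) 1 →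
        0 ≤ ((choi Λ).trace).re ∧ ((choi Λ).trace).re ≤ (da : ℝ) := by
      intro Λ hP hL
      refine ⟨psd_re_trace_nonneg hP, ?_⟩
      have h0 : (0 : ℂ) ≤ ((1 : Matrix (Fin da) (Fin da) ℂ) - ptraceB (choi Λ)).trace :=
        psd_trace_nonneg hL
      rw [Matrix.trace_sub, Matrix.trace_one, ptraceB_trace] at h0
      have := (Complex.le_def.mp h0).1
      simp only [Complex.zero_re, Complex.sub_re] at this
      have hcard : ((Fintype.card (Fin da) : ℂ)).re = (da : ℝ) := by
        rw [Fintype.card_fin]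
        push_cast
        rfl
      rw [hcard] at this
      linarith
    obtain ⟨h1nn, h1le⟩ := hreTr Λ1 hP1 hL1
    obtain ⟨h2nn, h2le⟩ := hreTr Λ2 hP2 hL2
    have hre1 : (((l1 : ℂ) • choi Λ1).trace).re = l1 * ((choi Λ1).trace).re := by
      rw [Matrix.trace_smul]
      simp [Complex.ext_iff, Complex.mul_re]
    have hre2 : (((l2 : ℂ) • choi Λ2).trace).re = l2 * ((choi Λ2).trace).re := by
      rw [Matrix.trace_smul]
      simp [Complex.ext_iff, Complex.mul_re]
    have hbound : traceNorm J ≤ (l1 + l2) * (da : ℝ) := by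
      rw [traceNorm_hermitian hH]
      calc ∑ i, |hH.eigenvalues i|
          ≤ (((l1 : ℂ) • choi Λ1).trace).re + (((l2 : ℂ) • choi Λ2).trace).re := htri
        _ = l1 * ((choi Λ1).trace).re + l2 * ((choi Λ2).trace).re := by rw [hre1, hre2]
        _ ≤ l1 * (da : ℝ) + l2 * (da : ℝ) := by
            have b1 : l1 * ((choi Λ1).trace).re ≤ l1 * (da : ℝ) :=
              mul_le_mul_of_nonneg_left h1le h1
            have b2 : l2 * ((choi Λ2).trace).re ≤ l2 * (da : ℝ) :=
              mul_le_mul_of_nonneg_left h2le h2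
            linarith
        _ = (l1 + l2) * (da : ℝ) := by ring
    have hda' : (0 : ℝ) < (da : ℝ) := by exact_mod_cast hda
    rw [one_div, inv_mul_le_iff₀ hda']
    calc traceNorm (choi Φ) = traceNorm J := by rw [hJ]
      _ ≤ (l1 + l2) * (da : ℝ) := hbound
      _ = (da : ℝ) * (l1 + l2) := by ring
  · -- upper bound
    rw [hCN, htn]
    exact csInf_le hbdd hmem
end

section
/- For any Hermiticity-preserving map Φ, the robustness R''(Φ) := min{ λ ≥ 0 : Φ + λΛ completely positive for some CPTP Λ } satisfies (1/d_A) Tr (J_Φ)₋ ≤ R''(Φ) ≤ Tr (J_Φ)₋, where (J_Φ)₋ is the negative part of the Choi matrix. -/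
open Matrix Kronecker ComplexOrder

/-- Robustness `R''`: the least `λ ≥ 0` such that `Φ + λΛ` is completely
positive for some CPTP Λ. -/
noncomputable def robustnessDoublePrime {da db : ℕ} (Φ : Matrix (Fin da) (Fin da) ℂ →ₗ[ℂ] Matrix (Fin db) (Fin db) ℂ) : ℝ :=
  sInf {l : ℝ | 0 ≤ l ∧ ∃ Λ : Matrix (Fin da) (Fin da) ℂ →ₗ[ℂ] Matrix (Fin db) (Fin db) ℂ, IsCPTP Λ ∧
    (choi Φ + l • choi Λ).PosSemidef}


section AuxRobustness

set_option linter.unusedSectionVars false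
set_option linter.unusedVariables false
section
open Matrix ComplexOrder Kronecker

variable {n m : Type*} [Fintype n] [DecidableEq n] [Fintype m] [DecidableEq m]

lemma psd_diag_nonneg {M : Matrix n n ℂ} (hM : M.PosSemidef) (i : n) : 0 ≤ M i i := by
  exact hM.diag_nonneg

lemma psd_trace_nonneg {M : Matrix n n ℂ} (hM : M.PosSemidef) : 0 ≤ M.trace :=
  Finset.sum_nonneg fun i _ => psd_diag_nonneg hM i

lemma trace_mul_psd_nonneg {A B : Matrix n n ℂ} (hA : A.PosSemidef) (hB : B.PosSemidef) :
    0 ≤ (A * B).trace := by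
  obtain ⟨C, rfl⟩ : ∃ C : Matrix n n ℂ, A = Cᴴ * C := by
    open scoped MatrixOrder in exact CStarAlgebra.nonneg_iff_eq_star_mul_self.mp hA.nonneg
  obtain ⟨D, rfl⟩ : ∃ D : Matrix n n ℂ, B = Dᴴ * D := by
    open scoped MatrixOrder in exact CStarAlgebra.nonneg_iff_eq_star_mul_self.mp hB.nonneg
  have : (Cᴴ * C * (Dᴴ * D)).trace = ((D * Cᴴ)ᴴ * (D * Cᴴ)).trace := by
    rw [Matrix.mul_assoc, trace_mul_comm, conjTranspose_mul, conjTranspose_conjTranspose,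
      Matrix.mul_assoc, Matrix.mul_assoc, Matrix.mul_assoc]
  rw [this]
  exact psd_trace_nonneg (posSemidef_conjTranspose_mul_self _)

lemma psd_smul_complex {c : ℂ} (hc : 0 ≤ c) {M : Matrix n n ℂ} (hM : M.PosSemidef) :
    (c • M).PosSemidef := by
  have hcr : star c = c := by
    rw [Complex.star_def, Complex.conj_eq_iff_im]
    exact ((Complex.le_def.mp hc).2).symm
  refine ⟨?_, fun x => ?_⟩
  · rw [Matrix.IsHermitian, conjTranspose_smul, hcr, hM.1.eq]
  · exact (hM.smul hc).2 x

lemma psd_smul_real {c : ℝ} (hc : 0 ≤ c) {M : Matrix n n ℂ} (hM : M.PosSemidef) :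
    (c • M).PosSemidef := by
  have : (c : ℝ) • M = ((c : ℂ)) • M := by
    ext i j; simp [Complex.real_smul]
  rw [this]
  exact psd_smul_complex (by exact_mod_cast Complex.zero_le_real.mpr hc) hM

lemma conjTranspose_kron (A : Matrix n n ℂ) (B : Matrix m m ℂ) :
    (A ⊗ₖ B)ᴴ = Aᴴ ⊗ₖ Bᴴ := by
  ext ⟨i, j⟩ ⟨k, l⟩
  simp [conjTranspose_apply, kroneckerMap_apply, mul_comm]

lemma psd_kron {A : Matrix n n ℂ} {B : Matrix m m ℂ} (hA : A.PosSemidef)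
    (hB : B.PosSemidef) : (A ⊗ₖ B).PosSemidef := by
  obtain ⟨C, rfl⟩ : ∃ C : Matrix n n ℂ, A = Cᴴ * C := by
    open scoped MatrixOrder in exact CStarAlgebra.nonneg_iff_eq_star_mul_self.mp hA.nonneg
  obtain ⟨D, rfl⟩ : ∃ D : Matrix m m ℂ, B = Dᴴ * D := by
    open scoped MatrixOrder in exact CStarAlgebra.nonneg_iff_eq_star_mul_self.mp hB.nonneg
  rw [Matrix.mul_kronecker_mul, ← conjTranspose_kron]
  exact posSemidef_conjTranspose_mul_self _

lemma herm_trace_eq_sum {M : Matrix n n ℂ} (hM : M.IsHermitian) :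
    M.trace = ((∑ i, hM.eigenvalues i : ℝ) : ℂ) := by
  conv_lhs => rw [hM.spectral_theorem, Unitary.conjStarAlgAut_apply]
  rw [Matrix.mul_assoc, trace_mul_comm, Matrix.mul_assoc,
    (Matrix.mem_unitaryGroup_iff').mp (hM.eigenvectorUnitary).2, Matrix.mul_one,
    trace_diagonal]
  push_cast
  rfl

lemma unitary_conj_psd {U : Matrix n n ℂ} (hU : U ∈ Matrix.unitaryGroup n ℂ)
    {d : n → ℂ} (hd : ∀ i, 0 ≤ d i) : (U * diagonal d * star U).PosSemidef := by
  rw [Matrix.star_eq_conjTranspose]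
  exact (Matrix.posSemidef_diagonal_iff.mpr hd).mul_mul_conjTranspose_same U

lemma trace_smul_one_sub_psd {M : Matrix n n ℂ} (hM : M.PosSemidef) :
    (M.trace • (1 : Matrix n n ℂ) - M).PosSemidef := by
  have h := hM.1
  set U : Matrix n n ℂ := (h.eigenvectorUnitary : Matrix n n ℂ) with hUdef
  have hU : U ∈ Matrix.unitaryGroup n ℂ := h.eigenvectorUnitary.2
  have hUU : U * star U = 1 := (Matrix.mem_unitaryGroup_iff).mp hU
  have key : M.trace • (1 : Matrix n n ℂ) - M
      = U * diagonal (fun i => (((∑ j, h.eigenvalues j) - h.eigenvalues i : ℝ) : ℂ)) * star U := by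
    have hdiag : diagonal (fun i => (((∑ j, h.eigenvalues j) - h.eigenvalues i : ℝ) : ℂ))
        = ((∑ j, h.eigenvalues j : ℝ) : ℂ) • (1 : Matrix n n ℂ)
          - diagonal (RCLike.ofReal ∘ h.eigenvalues) := by
      ext i j
      by_cases hij : i = j
      · subst hij
        simp [Matrix.diagonal_apply_eq, Matrix.sub_apply, Matrix.smul_apply, Matrix.one_apply_eq,
          Function.comp]
      · simp [Matrix.diagonal_apply_ne _ hij, Matrix.sub_apply, Matrix.smul_apply,
          Matrix.one_apply_ne hij]
    rw [hdiag, mul_sub, sub_mul, mul_smul_comm, smul_mul_assoc, Matrix.mul_one, hUU]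
    congr 1
    · rw [herm_trace_eq_sum h]
    · rw [hUdef]; exact h.spectral_theorem
  rw [key]
  refine unitary_conj_psd hU fun i => ?_
  rw [Complex.zero_le_real, sub_nonneg]
  exact Finset.single_le_sum (fun j _ => hM.eigenvalues_nonneg j) (Finset.mem_univ i)

lemma psd_eq_zero_of_trace_eq_zero {M : Matrix n n ℂ} (hM : M.PosSemidef)
    (ht : M.trace = 0) : M = 0 := by
  have h := hM.1
  have hsum : ((∑ i, h.eigenvalues i : ℝ) : ℂ) = 0 := (herm_trace_eq_sum h) ▸ ht
  have hzero : ∀ i ∈ Finset.univ, h.eigenvalues i = 0 := by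
    rw [← Finset.sum_eq_zero_iff_of_nonneg (fun i _ => hM.eigenvalues_nonneg i)]
    exact_mod_cast hsum
  have : diagonal (RCLike.ofReal ∘ h.eigenvalues) = (0 : Matrix n n ℂ) := by
    ext i j
    simp [Matrix.diagonal_apply, Function.comp, hzero i (Finset.mem_univ i)]
  rw [h.spectral_theorem, Unitary.conjStarAlgAut_apply, this, Matrix.mul_zero, Matrix.zero_mul]

lemma support_proj {M : Matrix n n ℂ} (hM : M.PosSemidef) :
    ∃ Pi : Matrix n n ℂ, Pi.PosSemidef ∧ ((1 : Matrix n n ℂ) - Pi).PosSemidef ∧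
      Pi * M = M ∧ ∀ P : Matrix n n ℂ, M * P = 0 → Pi * P = 0 := by
  have h := hM.1
  set U : Matrix n n ℂ := (h.eigenvectorUnitary : Matrix n n ℂ) with hUdef
  have hU : U ∈ Matrix.unitaryGroup n ℂ := h.eigenvectorUnitary.2
  have hUU : U * star U = 1 := (Matrix.mem_unitaryGroup_iff).mp hU
  have hUU' : star U * U = 1 := (Matrix.mem_unitaryGroup_iff').mp hU
  set d := h.eigenvalues with hddef
  set D' : Matrix n n ℂ := diagonal (fun i => if d i = 0 then 0 else 1) with hD'
  have hspec : M = U * diagonal (RCLike.ofReal ∘ d) * star U := by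
    rw [hUdef]; exact h.spectral_theorem
  refine ⟨U * D' * star U, ?_, ?_, ?_, ?_⟩
  · exact unitary_conj_psd hU fun i => by by_cases hi : d i = 0 <;> simp [hi]
  · have : (1 : Matrix n n ℂ) - U * D' * star U
        = U * diagonal (fun i => if d i = 0 then 1 else 0) * star U := by
      have h1 : (1 : Matrix n n ℂ) = U * 1 * star U := by rw [Matrix.mul_one, hUU]
      rw [hD']
      conv_lhs => rw [h1]
      rw [← Matrix.sub_mul, ← Matrix.mul_sub]
      congr 2
      ext i j
      by_cases hij : i = j
      · subst hij; simp [Matrix.diagonal_apply_eq, Matrix.one_apply_eq]; split_ifs <;> simp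
      · simp [Matrix.diagonal_apply_ne _ hij, Matrix.one_apply_ne hij]
    rw [this]
    exact unitary_conj_psd hU fun i => by split_ifs <;> simp
  · rw [hspec]
    calc U * D' * star U * (U * diagonal (RCLike.ofReal ∘ d) * star U)
        = U * (D' * ((star U * U) * diagonal (RCLike.ofReal ∘ d))) * star U := by
          simp only [Matrix.mul_assoc]
      _ = U * diagonal (RCLike.ofReal ∘ d) * star U := by
          rw [hUU', Matrix.one_mul]
          congr 2
          rw [hD', diagonal_mul_diagonal]
          ext i j
          by_cases hi : d i = 0 <;>
            simp [Matrix.diagonal_apply, Function.comp, hi]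
  · intro P hMP
    have h1 : diagonal (RCLike.ofReal ∘ d) * (star U * P) = 0 := by
      have : star U * (M * P) = 0 := by rw [hMP, Matrix.mul_zero]
      rw [hspec] at this
      calc diagonal (RCLike.ofReal ∘ d) * (star U * P)
          = (star U * U) * diagonal (RCLike.ofReal ∘ d) * (star U * P) := by
            rw [hUU', Matrix.one_mul]
        _ = star U * (U * diagonal (RCLike.ofReal ∘ d) * star U * P) := by
            simp only [Matrix.mul_assoc]
        _ = 0 := this
    have h2 : D' * (star U * P) = 0 := by
      ext i j
      have := congrFun (congrFun h1 i) j
      simp only [Matrix.mul_apply, Matrix.diagonal_apply, hD', ite_mul, zero_mul,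
        Finset.sum_ite_eq, Finset.mem_univ, if_true] at this ⊢
      by_cases hi : d i = 0
      · simp [hi]
      · simp only [hi, if_false, one_mul]
        have hco : (RCLike.ofReal (d i) : ℂ) ≠ 0 := by simpa using hi
        simp only [Function.comp] at this
        exact (mul_eq_zero.mp this).resolve_left hco
    calc U * D' * star U * P = U * (D' * (star U * P)) := by simp only [Matrix.mul_assoc]
      _ = 0 := by rw [h2, Matrix.mul_zero]

end

section
open Matrix ComplexOrder Kronecker

variable {a b : Type*} [Fintype a] [Fintype b] [DecidableEq a] [DecidableEq b]

lemma ptraceB_add (M N : Matrix (a × b) (a × b) ℂ) :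
    ptraceB (M + N) = ptraceB M + ptraceB N := by
  ext i j; simp [ptraceB, Finset.sum_add_distrib]

lemma ptraceB_smul (c : ℂ) (M : Matrix (a × b) (a × b) ℂ) :
    ptraceB (c • M) = c • ptraceB M := by
  ext i j; simp [ptraceB, Finset.mul_sum]

lemma ptraceB_kron (A : Matrix a a ℂ) (B : Matrix b b ℂ) :
    ptraceB (A ⊗ₖ B) = B.trace • A := by
  ext i j
  simp [ptraceB, kroneckerMap_apply, Matrix.trace, Matrix.diag, ← Finset.mul_sum, mul_comm]

lemma trace_ptraceB (M : Matrix (a × b) (a × b) ℂ) : (ptraceB M).trace = M.trace := by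
  simp [ptraceB, Matrix.trace, Matrix.diag, Fintype.sum_prod_type]

lemma psd_sum {ι : Type*} (s : Finset ι) (f : ι → Matrix a a ℂ)
    (h : ∀ i ∈ s, (f i).PosSemidef) : (∑ i ∈ s, f i).PosSemidef := by
  classical
  induction s using Finset.induction_on with
  | empty => simpa using Matrix.PosSemidef.zero
  | insert x s hni ih =>
    rw [Finset.sum_insert hni]
    exact (h x (Finset.mem_insert_self x s)).add (ih fun i hi => h i (Finset.mem_insert_of_mem hi))

lemma ptraceB_psd {M : Matrix (a × b) (a × b) ℂ} (hM : M.PosSemidef) :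
    (ptraceB M).PosSemidef := by
  have key : ptraceB M = ∑ k : b, (fun k : b =>
      (Matrix.of fun (p : a × b) (j : a) => if p = (j, k) then (1 : ℂ) else 0)ᴴ * M *
      (Matrix.of fun (p : a × b) (j : a) => if p = (j, k) then (1 : ℂ) else 0)) k := by
    ext i j
    simp only [ptraceB, Matrix.of_apply, Matrix.sum_apply, Matrix.mul_apply,
      Matrix.conjTranspose_apply, Matrix.of_apply]
    refine Finset.sum_congr rfl fun k _ => ?_
    simp [apply_ite, mul_ite, ite_mul, Finset.sum_ite_eq, Finset.sum_ite_eq']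
  rw [key]
  exact psd_sum _ _ fun k _ => hM.conjTranspose_mul_mul_same _

end

noncomputable def mapOfChoi {da db : ℕ} (Q : Matrix (Fin da × Fin db) (Fin da × Fin db) ℂ) :
    Matrix (Fin da) (Fin da) ℂ →ₗ[ℂ] Matrix (Fin db) (Fin db) ℂ where
  toFun X := Matrix.of fun r s => ∑ p, ∑ q, X p q * Q (p, r) (q, s)
  map_add' X Y := by
    ext r s
    simp [add_mul, Finset.sum_add_distrib]
  map_smul' c X := by
    ext r s
    simp [Finset.mul_sum, mul_assoc]

lemma choi_mapOfChoi {da db : ℕ} (Q : Matrix (Fin da × Fin db) (Fin da × Fin db) ℂ) :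
    choi (mapOfChoi Q) = Q := by
  ext p q
  simp only [choi, mapOfChoi, Matrix.of_apply, LinearMap.coe_mk, AddHom.coe_mk,
    Matrix.single]
  rw [Finset.sum_eq_single p.1]
  · rw [Finset.sum_eq_single q.1]
    · simp
    · intro l _ hl; simp [hl.symm]
    · simp
  · intro k _ hk; simp [Ne.symm hk]
  · simp

end AuxRobustness

/-- `(1/d_A) Tr (J_Φ)₋ ≤ R''(Φ) ≤ Tr (J_Φ)₋`, where
`J_Φ = P - N` is the Jordan decomposition of the Choi matrix. -/
theorem robustnessDoublePrime_bounds {da db : ℕ} (hda : 0 < da)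
    (Φ : Matrix (Fin da) (Fin da) ℂ →ₗ[ℂ] Matrix (Fin db) (Fin db) ℂ) (hH : (choi Φ).IsHermitian)
    (P N : Matrix (Fin da × Fin db) (Fin da × Fin db) ℂ)
    (hP : P.PosSemidef) (hN : N.PosSemidef)
    (hdec : choi Φ = P - N) (horth : P * N = 0) :
    (1 / (da : ℝ)) * (N.trace).re ≤ robustnessDoublePrime Φ ∧
    robustnessDoublePrime Φ ≤ (N.trace).re := by
  classical
  have hS : robustnessDoublePrime Φ = sInf {l : ℝ | 0 ≤ l ∧
      ∃ Λ : Matrix (Fin da) (Fin da) ℂ →ₗ[ℂ] Matrix (Fin db) (Fin db) ℂ, IsCPTP Λ ∧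
      (choi Φ + l • choi Λ).PosSemidef} := rfl
  set S : Set ℝ := {l : ℝ | 0 ≤ l ∧
      ∃ Λ : Matrix (Fin da) (Fin da) ℂ →ₗ[ℂ] Matrix (Fin db) (Fin db) ℂ, IsCPTP Λ ∧
      (choi Φ + l • choi Λ).PosSemidef} with hSdef
  have hbdd : BddBelow S := ⟨0, fun x hx => hx.1⟩
  have htN : 0 ≤ N.trace := psd_trace_nonneg hN
  have htr0 : 0 ≤ (N.trace).re := by
    have := (Complex.le_def.mp htN).1; simpa using this
  have him : (N.trace).im = 0 := ((Complex.le_def.mp htN).2).symm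
  have htre : N.trace = (((N.trace).re : ℝ) : ℂ) := by
    apply Complex.ext <;> simp [him]
  rcases Nat.eq_zero_or_pos db with hdb | hdb
  · -- degenerate case db = 0
    subst hdb
    haveI : IsEmpty (Fin da × Fin 0) := ⟨fun p => p.2.elim0⟩
    have hNt : N.trace = 0 := Matrix.trace_eq_zero_of_isEmpty N
    have hSempty : S = (∅ : Set ℝ) := by
      ext l
      simp only [hSdef, Set.mem_setOf_eq, Set.mem_empty_iff_false, iff_false, not_and]
      rintro - ⟨Λ, ⟨-, hTP⟩, -⟩
      have := congrFun (congrFun hTP ⟨0, hda⟩) ⟨0, hda⟩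
      simp [ptraceB, Matrix.one_apply] at this
    rw [hS, hSempty, Real.sInf_empty, hNt]
    norm_num
  · -- main case db > 0
    have hdbR : (0 : ℝ) < (db : ℝ) := by exact_mod_cast hdb
    set τ : Matrix (Fin db) (Fin db) ℂ := (((db : ℝ)⁻¹ : ℝ) : ℂ) • 1 with hτ
    have hτpsd : τ.PosSemidef :=
      psd_smul_complex (Complex.zero_le_real.mpr (by positivity)) Matrix.PosSemidef.one
    have hτtr : τ.trace = 1 := by
      rw [hτ, Matrix.trace_smul, Matrix.trace_one, Fintype.card_fin, smul_eq_mul]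
      push_cast
      field_simp
    have hmem : (N.trace).re ∈ S := by
      by_cases hc : N.trace = 0
      · have hN0 : N = 0 := psd_eq_zero_of_trace_eq_zero hN hc
        have htr : (N.trace).re = 0 := by rw [hc]; simp
        refine ⟨htr0, mapOfChoi ((1 : Matrix (Fin da) (Fin da) ℂ) ⊗ₖ τ), ⟨?_, ?_⟩, ?_⟩
        · rw [choi_mapOfChoi]
          exact psd_kron Matrix.PosSemidef.one hτpsd
        · rw [choi_mapOfChoi, ptraceB_kron, hτtr, one_smul]
        · rw [htr, zero_smul, add_zero, hdec, hN0, sub_zero]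
          exact hP
      · -- N.trace ≠ 0
        have htrne : (N.trace).re ≠ 0 := fun h => hc (by rw [htre, h]; simp)
        set tr : ℝ := (N.trace).re with htrdef
        set cinv : ℂ := ((tr⁻¹ : ℝ) : ℂ) with hcinv
        have hcinv0 : 0 ≤ cinv := Complex.zero_le_real.mpr (by positivity)
        set R := ptraceB N with hR
        have hRpsd : R.PosSemidef := ptraceB_psd hN
        have hRtr : R.trace = N.trace := trace_ptraceB N
        have hK : ((1 : Matrix (Fin da) (Fin da) ℂ) - cinv • R).PosSemidef := by
          have h1 := trace_smul_one_sub_psd hRpsd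
          have h2 := psd_smul_complex hcinv0 h1
          have h3 : cinv • (R.trace • (1 : Matrix (Fin da) (Fin da) ℂ) - R)
              = (1 : Matrix (Fin da) (Fin da) ℂ) - cinv • R := by
            rw [smul_sub, smul_smul, hRtr, htre, hcinv, ← Complex.ofReal_mul,
              inv_mul_cancel₀ htrne, Complex.ofReal_one, one_smul]
          rwa [h3] at h2
        set Q := cinv • N + ((1 : Matrix (Fin da) (Fin da) ℂ) - cinv • R) ⊗ₖ τ with hQ
        have hQpsd : Q.PosSemidef := (psd_smul_complex hcinv0 hN).add (psd_kron hK hτpsd)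
        have hQtp : ptraceB Q = 1 := by
          rw [hQ, ptraceB_add, ptraceB_smul, ptraceB_kron, hτtr, one_smul, ← hR]
          abel
        refine ⟨htr0, mapOfChoi Q, ⟨?_, ?_⟩, ?_⟩
        · rw [choi_mapOfChoi]; exact hQpsd
        · rw [choi_mapOfChoi]; exact hQtp
        · rw [choi_mapOfChoi, hdec]
          have hreal : (tr : ℝ) • Q = ((tr : ℝ) : ℂ) • Q := by
            ext i j; simp [Complex.real_smul]
          have hfin : P - N + tr • Q
              = P + ((tr : ℝ) : ℂ) • (((1 : Matrix (Fin da) (Fin da) ℂ) - cinv • R) ⊗ₖ τ) := by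
            rw [hreal, hQ, smul_add, smul_smul, hcinv, ← Complex.ofReal_mul,
              mul_inv_cancel₀ htrne, Complex.ofReal_one, one_smul]
            abel
          rw [hfin]
          exact hP.add (psd_smul_complex (Complex.zero_le_real.mpr htr0) (psd_kron hK hτpsd))
    have hub : robustnessDoublePrime Φ ≤ (N.trace).re := by
      rw [hS]
      exact csInf_le hbdd hmem
    have hlb : (1 / (da : ℝ)) * (N.trace).re ≤ robustnessDoublePrime Φ := by
      rw [hS]
      refine le_csInf ⟨(N.trace).re, hmem⟩ fun l hl => ?_
      obtain ⟨hl0, Λ, ⟨hJpsd, hJtp⟩, hSpsd⟩ := hl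
      set J := choi Λ with hJ
      obtain ⟨Pi, hPi, hPi1, hPiN, hPikill⟩ := support_proj hN
      have hNP : N * P = 0 := by
        have := congrArg Matrix.conjTranspose horth
        rwa [Matrix.conjTranspose_mul, hP.1.eq, hN.1.eq, Matrix.conjTranspose_zero] at this
      have hPiP : Pi * P = 0 := hPikill P hNP
      have hJtrace : J.trace = ((da : ℝ) : ℂ) := by
        rw [← trace_ptraceB, hJtp, Matrix.trace_one]
        simp
      have hkey : Pi * (choi Φ + l • J) = l • (Pi * J) - N := by
        rw [hdec, Matrix.mul_add, Matrix.mul_sub, hPiP, hPiN, mul_smul_comm]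
        abel
      have h0 : 0 ≤ (Pi * (choi Φ + l • J)).trace := trace_mul_psd_nonneg hPi hSpsd
      rw [hkey, Matrix.trace_sub, Matrix.trace_smul] at h0
      set z : ℂ := (Pi * J).trace with hz
      have hz0 : 0 ≤ z := trace_mul_psd_nonneg hPi hJpsd
      have hzre0 : 0 ≤ z.re := by have := (Complex.le_def.mp hz0).1; simpa using this
      have hzda : z.re ≤ (da : ℝ) := by
        have h2 : 0 ≤ ((1 - Pi) * J).trace := trace_mul_psd_nonneg hPi1 hJpsd
        have h3 : ((1 - Pi) * J).trace = J.trace - z := by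
          rw [Matrix.sub_mul, Matrix.one_mul, Matrix.trace_sub]
        rw [h3, hJtrace] at h2
        have := (Complex.le_def.mp h2).1
        simp only [Complex.zero_re, Complex.sub_re, Complex.ofReal_re] at this
        linarith
      have hre : 0 ≤ l * z.re - (N.trace).re := by
        have := (Complex.le_def.mp h0).1
        simpa [Complex.sub_re, Complex.real_smul, Complex.mul_re] using this
      have h4 : (N.trace).re ≤ l * (da : ℝ) := by
        have h5 : l * z.re ≤ l * (da : ℝ) := mul_le_mul_of_nonneg_left hzda hl0
        linarith
      have hdaR : (0 : ℝ) < (da : ℝ) := by exact_mod_cast hda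
      rw [div_mul_eq_mul_div, one_mul, div_le_iff₀ hdaR]
      linarith [mul_comm l (da : ℝ)]
    exact ⟨hlb, hub⟩
end

section
/- For the qubit dephasing channel Δ_p(X) = (1−p)X + pZXZ with 0 ≤ p < 1/2, the inverse map Δ_p^{-1} is trace preserving, and its diamond norm equals 1/(1−2p). -/
open Matrix Kronecker ComplexOrder

/-- The Pauli `Z` matrix. -/
def pauliZ : Matrix (Fin 2) (Fin 2) ℂ := !![1, 0; 0, -1]

/-- Conjugation by Pauli `Z`: `X ↦ Z X Z`. -/
noncomputable def zConj : Matrix (Fin 2) (Fin 2) ℂ →ₗ[ℂ] Matrix (Fin 2) (Fin 2) ℂ :=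
  (LinearMap.mulLeft ℂ pauliZ).comp (LinearMap.mulRight ℂ pauliZ)

/-- The qubit dephasing channel `Δ_p(X) = (1-p) X + p Z X Z`. -/
noncomputable def dephasing (p : ℝ) :
    Matrix (Fin 2) (Fin 2) ℂ →ₗ[ℂ] Matrix (Fin 2) (Fin 2) ℂ :=
  (((1 - p : ℝ) : ℂ) • LinearMap.id) + (((p : ℝ) : ℂ) • zConj)

section GenAux
open Polynomial ComplexOrder

lemma aux_charpoly_conj {n : Type*} [Fintype n] [DecidableEq n]
    (U A : Matrix n n ℂ) (hU : U ∈ Matrix.unitaryGroup n ℂ) :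
    (U * A * Uᴴ).charpoly = A.charpoly := by
  have hUU : U * Uᴴ = 1 := (Matrix.mem_unitaryGroup_iff).mp hU
  have h1 : (C : ℂ →+* ℂ[X]).mapMatrix U * (C : ℂ →+* ℂ[X]).mapMatrix Uᴴ = 1 := by
    rw [← _root_.map_mul, hUU, _root_.map_one]
  have key : Matrix.charmatrix (U * A * Uᴴ) =
      ((C : ℂ →+* ℂ[X]).mapMatrix U) * Matrix.charmatrix A * ((C : ℂ →+* ℂ[X]).mapMatrix Uᴴ) := by
    simp only [Matrix.charmatrix, mul_sub, sub_mul, _root_.map_mul]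
    congr 1
    calc (Matrix.scalar n) (X : ℂ[X])
        = (Matrix.scalar n) (X : ℂ[X]) *
            ((C : ℂ →+* ℂ[X]).mapMatrix U * (C : ℂ →+* ℂ[X]).mapMatrix Uᴴ) := by
          rw [h1, mul_one]
      _ = (C : ℂ →+* ℂ[X]).mapMatrix U * (Matrix.scalar n) (X : ℂ[X]) *
            (C : ℂ →+* ℂ[X]).mapMatrix Uᴴ := by
          rw [← mul_assoc, (Matrix.scalar_commute (X : ℂ[X]) (Commute.all _) _).eq]
  have hUU' : Uᴴ * U = 1 := Matrix.mem_unitaryGroup_iff'.mp hU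
  have h2 : (C : ℂ →+* ℂ[X]).mapMatrix Uᴴ * (C : ℂ →+* ℂ[X]).mapMatrix U = 1 := by
    rw [← _root_.map_mul, hUU', _root_.map_one]
  unfold Matrix.charpoly
  rw [key, Matrix.det_mul, Matrix.det_mul, mul_comm, ← mul_assoc, ← Matrix.det_mul, h2,
    Matrix.det_one, one_mul]

lemma aux_charpoly_diagonal {n : Type*} [Fintype n] [DecidableEq n] (d : n → ℂ) :
    (Matrix.diagonal d).charpoly = ∏ i, (X - C (d i)) := by
  unfold Matrix.charpoly
  have : Matrix.charmatrix (Matrix.diagonal d) = Matrix.diagonal (fun i => X - C (d i)) := by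
    ext i j
    by_cases h : i = j
    · subst h; simp
    · simp [h, Matrix.charmatrix_apply_ne _ _ _ h, Matrix.diagonal_apply_ne _ h]
  rw [this, Matrix.det_diagonal]

lemma aux_eigen_multiset {n : Type*} [Fintype n] [DecidableEq n] {A : Matrix n n ℂ}
    (hA : A.IsHermitian) (U : Matrix n n ℂ) (hU : U ∈ Matrix.unitaryGroup n ℂ)
    (d : n → ℝ) (hAd : A = U * Matrix.diagonal (fun i => (d i : ℂ)) * Uᴴ) :
    Multiset.map hA.eigenvalues Finset.univ.val = Multiset.map d Finset.univ.val := by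
  have h2 : A.charpoly = ∏ i, (X - C ((d i : ℂ))) := by
    rw [hAd, aux_charpoly_conj _ _ hU, aux_charpoly_diagonal]
  have h3 : A.charpoly = ∏ i, (X - C ((hA.eigenvalues i : ℂ))) := by
    nth_rewrite 1 [hA.spectral_theorem]
    simp only [Unitary.conjStarAlgAut_apply, Unitary.coe_star]
    rw [show (star (hA.eigenvectorUnitary : Matrix n n ℂ))
        = (hA.eigenvectorUnitary : Matrix n n ℂ)ᴴ from rfl,
      aux_charpoly_conj _ _ hA.eigenvectorUnitary.2]
    have : (RCLike.ofReal ∘ hA.eigenvalues : n → ℂ)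
        = fun i => ((hA.eigenvalues i : ℝ) : ℂ) := rfl
    rw [this, aux_charpoly_diagonal]
  have hroots : ∀ (a : n → ℝ), (∏ i, (X - C ((a i : ℂ)))).roots
      = Multiset.map (fun i => ((a i : ℝ) : ℂ)) Finset.univ.val := by
    intro a
    have : (∏ i, (X - C ((a i : ℂ)))) =
        ((Multiset.map (fun i => ((a i : ℝ) : ℂ)) Finset.univ.val).map fun z => X - C z).prod := by
      rw [Multiset.map_map]; rfl
    rw [this, Polynomial.roots_multiset_prod_X_sub_C]
  have := congrArg Polynomial.roots (h3.symm.trans h2)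
  rw [hroots, hroots] at this
  have hinj : Function.Injective (fun x : ℝ => (x : ℂ)) := Complex.ofReal_injective
  apply Multiset.map_injective hinj
  simpa [Multiset.map_map] using this

lemma aux_eigen_sum {n : Type*} [Fintype n] [DecidableEq n] {A : Matrix n n ℂ}
    (hA : A.IsHermitian) (U : Matrix n n ℂ) (hU : U ∈ Matrix.unitaryGroup n ℂ)
    (d : n → ℝ) (hAd : A = U * Matrix.diagonal (fun i => (d i : ℂ)) * Uᴴ) (f : ℝ → ℝ) :
    ∑ i, f (hA.eigenvalues i) = ∑ i, f (d i) := by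
  have e1 : ∀ (g : n → ℝ), ∑ i, f (g i)
      = (Multiset.map f (Multiset.map g Finset.univ.val)).sum := by
    intro g; rw [Multiset.map_map]; rfl
  rw [e1, e1, aux_eigen_multiset hA U hU d hAd]

lemma aux_diag_real_conjTranspose {n : Type*} [Fintype n] [DecidableEq n] (d : n → ℝ) :
    (Matrix.diagonal (fun i => (d i : ℂ)))ᴴ = Matrix.diagonal (fun i => (d i : ℂ)) := by
  rw [Matrix.diagonal_conjTranspose]
  congr 1
  funext i
  simp [Pi.star_def, Complex.conj_ofReal]

lemma aux_traceNorm_of_diag {n : Type*} [Fintype n] [DecidableEq n] {X : Matrix n n ℂ}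
    (U : Matrix n n ℂ) (hU : U ∈ Matrix.unitaryGroup n ℂ) (d : n → ℝ)
    (hX : X = U * Matrix.diagonal (fun i => (d i : ℂ)) * Uᴴ) :
    traceNorm X = ∑ i, |d i| := by
  have hUU' : Uᴴ * U = 1 := Matrix.mem_unitaryGroup_iff'.mp hU
  set D : Matrix n n ℂ := Matrix.diagonal (fun i => (d i : ℂ)) with hD
  have hXX : X * Xᴴ = U * Matrix.diagonal (fun i => ((d i ^ 2 : ℝ) : ℂ)) * Uᴴ := by
    rw [hX, Matrix.conjTranspose_mul, Matrix.conjTranspose_mul,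
      Matrix.conjTranspose_conjTranspose, aux_diag_real_conjTranspose]
    rw [← hD]
    have e1 : U * D * Uᴴ * (U * (D * Uᴴ)) = U * (D * (Uᴴ * U) * D) * Uᴴ := by
      noncomm_ring
    rw [e1, hUU', mul_one, hD, Matrix.diagonal_mul_diagonal]
    congr 2
    funext i
    push_cast
    ring
  unfold traceNorm singVals
  rw [aux_eigen_sum (Matrix.isHermitian_mul_conjTranspose_self X) U hU _ hXX Real.sqrt]
  exact Finset.sum_congr rfl fun i _ => Real.sqrt_sq_eq_abs (d i)

lemma aux_psd_diag_entry {n : Type*} [Fintype n] [DecidableEq n] {M : Matrix n n ℂ}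
    (hM : M.PosSemidef) (i : n) : 0 ≤ M i i := by
  have := hM.dotProduct_mulVec_nonneg (Pi.single i 1)
  simpa [dotProduct, Pi.single_apply, Matrix.mulVec, Finset.sum_ite_eq,
    Finset.sum_ite_eq'] using this

lemma aux_psd_trace_re_nonneg {n : Type*} [Fintype n] [DecidableEq n] {M : Matrix n n ℂ}
    (hM : M.PosSemidef) : 0 ≤ Complex.re M.trace := by
  rw [Matrix.trace, Complex.re_sum]
  exact Finset.sum_nonneg fun i _ => (Complex.nonneg_iff.mp (aux_psd_diag_entry hM i)).1

open scoped MatrixOrder Matrix.Norms.L2Operator in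
lemma aux_psd_mul_trace_re_nonneg {n : Type*} [Fintype n] [DecidableEq n]
    {A B : Matrix n n ℂ} (hA : A.PosSemidef) (hB : B.PosSemidef) :
    0 ≤ Complex.re (A * B).trace := by
  obtain ⟨C, hC⟩ := CStarAlgebra.nonneg_iff_eq_star_mul_self.mp hA.nonneg
  rw [hC, mul_assoc, Matrix.trace_mul_comm]
  exact aux_psd_trace_re_nonneg (hB.mul_mul_conjTranspose_same C)

lemma aux_conj_mul_conj {n : Type*} [Fintype n] [DecidableEq n]
    (V : Matrix n n ℂ) (hV : Vᴴ * V = 1) (a b : n → ℂ) :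
    (V * Matrix.diagonal a * Vᴴ) * (V * Matrix.diagonal b * Vᴴ)
      = V * Matrix.diagonal (fun i => a i * b i) * Vᴴ := by
  have e : (V * Matrix.diagonal a * Vᴴ) * (V * Matrix.diagonal b * Vᴴ)
      = V * (Matrix.diagonal a * (Vᴴ * V) * Matrix.diagonal b) * Vᴴ := by noncomm_ring
  rw [e, hV, mul_one, Matrix.diagonal_mul_diagonal]

lemma aux_trace_conj {n : Type*} [Fintype n] [DecidableEq n]
    (V : Matrix n n ℂ) (hV : Vᴴ * V = 1) (a : n → ℂ) :
    (V * Matrix.diagonal a * Vᴴ).trace = ∑ i, a i := by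
  rw [Matrix.trace_mul_cycle, hV, one_mul, Matrix.trace_diagonal]

lemma aux_traceNorm_sub_le {n : Type*} [Fintype n] [DecidableEq n]
    {P Q : Matrix n n ℂ} (hP : P.PosSemidef) (hQ : Q.PosSemidef) :
    traceNorm (P - Q) ≤ Complex.re P.trace + Complex.re Q.trace := by
  have hH : (P - Q).IsHermitian := hP.1.sub hQ.1
  set V : Matrix n n ℂ := ↑hH.eigenvectorUnitary with hVdef
  have hVmem : V ∈ Matrix.unitaryGroup n ℂ := hH.eigenvectorUnitary.2
  have hV : Vᴴ * V = 1 := Matrix.mem_unitaryGroup_iff'.mp hVmem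
  have hV' : V * Vᴴ = 1 := Matrix.mem_unitaryGroup_iff.mp hVmem
  set lam : n → ℝ := hH.eigenvalues with hlam
  have hspec : P - Q = V * Matrix.diagonal (fun i => ((lam i : ℝ) : ℂ)) * Vᴴ :=
    hH.spectral_theorem
  set s : n → ℝ := fun i => if 0 ≤ lam i then 1 else -1 with hs
  set Sg : Matrix n n ℂ := V * Matrix.diagonal (fun i => ((s i : ℝ) : ℂ)) * Vᴴ with hSg
  have habs : ∀ i, s i * lam i = |lam i| := by
    intro i
    by_cases h : 0 ≤ lam i
    · simp [hs, h, abs_of_nonneg h]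
    · simp [hs, h, abs_of_neg (lt_of_not_ge h)]
  have hone : (1 : Matrix n n ℂ) = V * Matrix.diagonal (fun _ => (1:ℂ)) * Vᴴ := by
    rw [Matrix.diagonal_one, mul_one, hV']
  have hpsd : ∀ t : n → ℝ, (∀ i, 0 ≤ t i) →
      (V * Matrix.diagonal (fun i => ((t i : ℝ) : ℂ)) * Vᴴ).PosSemidef := by
    intro t ht
    exact (Matrix.PosSemidef.diagonal
      (fun i => Complex.zero_le_real.mpr (ht i))).mul_mul_conjTranspose_same V
  have hsbd : ∀ i, -1 ≤ s i ∧ s i ≤ 1 := by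
    intro i; by_cases h : 0 ≤ lam i <;> simp [hs, h]
  have hsub : (1 - Sg) = V * Matrix.diagonal (fun i => ((1 - s i : ℝ) : ℂ)) * Vᴴ := by
    have e : (fun i => ((1 - s i : ℝ) : ℂ)) = fun i : n => (1:ℂ) - ((s i : ℝ) : ℂ) := by
      funext i; simp
    rw [hone, hSg, e, ← Matrix.diagonal_sub, mul_sub, sub_mul]
  have hadd : (1 + Sg) = V * Matrix.diagonal (fun i => ((1 + s i : ℝ) : ℂ)) * Vᴴ := by
    have e : (fun i => ((1 + s i : ℝ) : ℂ)) = fun i : n => (1:ℂ) + ((s i : ℝ) : ℂ) := by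
      funext i; simp
    rw [hone, hSg, e, ← Matrix.diagonal_add, mul_add, add_mul]
  have h1 : (1 - Sg).PosSemidef := by
    rw [hsub]; exact hpsd _ fun i => by linarith [(hsbd i).2]
  have h2 : (1 + Sg).PosSemidef := by
    rw [hadd]; exact hpsd _ fun i => by linarith [(hsbd i).1]
  have h3 : Complex.re (Sg * (P - Q)).trace = ∑ i, |lam i| := by
    rw [hSg, hspec, aux_conj_mul_conj V hV, aux_trace_conj V hV]
    have : ∀ i, ((s i : ℝ) : ℂ) * ((lam i : ℝ) : ℂ) = ((|lam i| : ℝ) : ℂ) := by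
      intro i; rw [← Complex.ofReal_mul, habs i]
    simp only [this]
    rw [← Complex.ofReal_sum]
    exact Complex.ofReal_re _
  have h5 : Complex.re (Sg * P).trace ≤ Complex.re P.trace := by
    have := aux_psd_mul_trace_re_nonneg h1 hP
    rw [sub_mul, one_mul, Matrix.trace_sub, Complex.sub_re] at this
    linarith
  have h6 : -Complex.re (Sg * Q).trace ≤ Complex.re Q.trace := by
    have := aux_psd_mul_trace_re_nonneg h2 hQ
    rw [add_mul, one_mul, Matrix.trace_add, Complex.add_re] at this
    linarith
  have h4 : Complex.re (Sg * (P - Q)).trace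
      = Complex.re (Sg * P).trace - Complex.re (Sg * Q).trace := by
    rw [mul_sub, Matrix.trace_sub, Complex.sub_re]
  have hTN : traceNorm (P - Q) = ∑ i, |lam i| :=
    aux_traceNorm_of_diag V hVmem lam hspec
  rw [hTN, ← h3, h4]
  linarith

lemma aux_psd_smul {n : Type*} [Fintype n] [DecidableEq n] {M : Matrix n n ℂ}
    (hM : M.PosSemidef) {c : ℝ} (hc : 0 ≤ c) : ((c : ℂ) • M).PosSemidef := by
  refine Matrix.PosSemidef.of_dotProduct_mulVec_nonneg ?_ ?_
  · show ((c : ℂ) • M)ᴴ = (c : ℂ) • M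
    rw [Matrix.conjTranspose_smul, Complex.star_def, Complex.conj_ofReal, hM.1.eq]
  · intro x
    rw [Matrix.smul_mulVec, dotProduct_smul, smul_eq_mul]
    exact mul_nonneg (Complex.zero_le_real.mpr hc) (hM.dotProduct_mulVec_nonneg x)

end GenAux
section Aux
open Polynomial

/-! ### Pauli-Z basics and the explicit inverse map -/

lemma aux_pauliZ_sq : pauliZ * pauliZ = 1 := by
  ext i j
  fin_cases i <;> fin_cases j <;>
    simp [pauliZ, Matrix.mul_apply, Fin.sum_univ_two, Matrix.one_apply]

lemma aux_zConj_apply (X : Matrix (Fin 2) (Fin 2) ℂ) :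
    zConj X = pauliZ * (X * pauliZ) := rfl

lemma aux_zConj_entry (M : Matrix (Fin 2) (Fin 2) ℂ) (i j : Fin 2) :
    zConj M i j = (if i = 0 then 1 else -1) * ((if j = 0 then 1 else -1) * M i j) := by
  fin_cases i <;> fin_cases j <;>
    simp [aux_zConj_apply, pauliZ, Matrix.mul_apply, Fin.sum_univ_two] <;> ring

/-- The explicit inverse of the dephasing channel. -/
noncomputable def theta (a nb : ℝ) :
    Matrix (Fin 2) (Fin 2) ℂ →ₗ[ℂ] Matrix (Fin 2) (Fin 2) ℂ :=
  ((a : ℂ) • LinearMap.id) - ((nb : ℂ) • zConj)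

lemma aux_theta_apply (a nb : ℝ) (X : Matrix (Fin 2) (Fin 2) ℂ) :
    theta a nb X = (a : ℂ) • X - (nb : ℂ) • (pauliZ * (X * pauliZ)) := rfl

lemma aux_dephasing_comp_theta (p a nb : ℝ)
    (hc1 : (1 - p) * a - p * nb = 1) (hc2 : p * a - (1 - p) * nb = 0) :
    dephasing p ∘ₗ theta a nb = LinearMap.id := by
  apply LinearMap.ext
  intro X
  have hZXZ : pauliZ * ((pauliZ * (X * pauliZ)) * pauliZ) = X := by
    have e : pauliZ * ((pauliZ * (X * pauliZ)) * pauliZ)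
        = (pauliZ * pauliZ) * X * (pauliZ * pauliZ) := by noncomm_ring
    rw [e, aux_pauliZ_sq, one_mul, mul_one]
  have expand : dephasing p (theta a nb X)
      = (((1 - p) * a - p * nb : ℝ) : ℂ) • X
        - (((1 - p) * nb - p * a : ℝ) : ℂ) • (pauliZ * (X * pauliZ)) := by
    simp only [dephasing, LinearMap.add_apply, LinearMap.smul_apply, LinearMap.id_apply,
      aux_zConj_apply, aux_theta_apply]
    rw [sub_mul, mul_sub, smul_mul_assoc, smul_mul_assoc, mul_smul_comm, mul_smul_comm, hZXZ]
    push_cast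
    match_scalars <;> ring
  rw [LinearMap.comp_apply, expand, hc1]
  have : ((1 - p) * nb - p * a : ℝ) = 0 := by linarith
  rw [this]
  push_cast
  simp

lemma aux_psi_eq_theta (p a nb : ℝ)
    (hc1 : (1 - p) * a - p * nb = 1) (hc2 : p * a - (1 - p) * nb = 0)
    (Ψ : Matrix (Fin 2) (Fin 2) ℂ →ₗ[ℂ] Matrix (Fin 2) (Fin 2) ℂ)
    (hl : Ψ ∘ₗ dephasing p = LinearMap.id) :
    Ψ = theta a nb := by
  calc Ψ = Ψ ∘ₗ (dephasing p ∘ₗ theta a nb) := by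
        rw [aux_dephasing_comp_theta p a nb hc1 hc2, LinearMap.comp_id]
    _ = (Ψ ∘ₗ dephasing p) ∘ₗ theta a nb := by rw [LinearMap.comp_assoc]
    _ = theta a nb := by rw [hl, LinearMap.id_comp]

lemma aux_theta_trace (a nb : ℝ) (h : a - nb = 1) (X : Matrix (Fin 2) (Fin 2) ℂ) :
    (theta a nb X).trace = X.trace := by
  have e : (pauliZ * (X * pauliZ)).trace = X.trace := by
    rw [← Matrix.mul_assoc, Matrix.trace_mul_cycle, aux_pauliZ_sq, Matrix.one_mul]
  rw [aux_theta_apply, Matrix.trace_sub, Matrix.trace_smul, Matrix.trace_smul, e,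
    smul_eq_mul, smul_eq_mul, ← sub_mul, ← Complex.ofReal_sub, h]
  simp

end Aux
section BoundAux
open ComplexOrder

/-- The matrix `1 ⊗ Z` on the bipartite space. -/
noncomputable def wmat : Matrix (Fin 2 × Fin 2) (Fin 2 × Fin 2) ℂ :=
  Matrix.diagonal (fun p => if p.2 = 0 then 1 else -1)

lemma aux_wmat_conjTranspose : wmatᴴ = wmat := by
  rw [wmat, Matrix.diagonal_conjTranspose]
  have : (star fun p : Fin 2 × Fin 2 => if p.2 = 0 then (1:ℂ) else -1)
      = fun p : Fin 2 × Fin 2 => if p.2 = 0 then (1:ℂ) else -1 := by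
    funext p
    by_cases h : p.2 = 0 <;> simp [Pi.star_def, h]
  rw [this]


lemma aux_wmat_mul_self : wmat * wmat = 1 := by
  ext p q
  by_cases hpq : p = q
  · subst hpq
    by_cases h : p.2 = 0 <;>
      simp [wmat, Matrix.mul_apply, Matrix.diagonal_apply, Matrix.one_apply, h]
  · simp [wmat, Matrix.mul_apply, Matrix.diagonal_apply, Matrix.one_apply, hpq]

lemma aux_idTensor_theta (a nb : ℝ) (ρ : Matrix (Fin 2 × Fin 2) (Fin 2 × Fin 2) ℂ) :
    idTensor (theta a nb) ρ = (a : ℂ) • ρ - (nb : ℂ) • (wmat * ρ * wmatᴴ) := by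
  rw [aux_wmat_conjTranspose]
  ext p q
  obtain ⟨p1, p2⟩ := p
  obtain ⟨q1, q2⟩ := q
  have hL : idTensor (theta a nb) ρ (p1, p2) (q1, q2)
      = (a : ℂ) * ρ (p1, p2) (q1, q2)
        - (nb : ℂ) * ((if p2 = 0 then 1 else -1) * ((if q2 = 0 then 1 else -1)
            * ρ (p1, p2) (q1, q2))) := by
    show (theta a nb (Matrix.of fun k l => ρ (p1, k) (q1, l))) p2 q2 = _
    rw [aux_theta_apply]
    rw [Matrix.sub_apply, Matrix.smul_apply, Matrix.smul_apply,
      show pauliZ * ((Matrix.of fun k l => ρ (p1, k) (q1, l)) * pauliZ)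
        = zConj (Matrix.of fun k l => ρ (p1, k) (q1, l)) from rfl,
      aux_zConj_entry]
    simp [smul_eq_mul]
  rw [hL]
  have hR : (wmat * ρ * wmat) (p1, p2) (q1, q2)
      = (if p2 = 0 then 1 else -1) * ((if q2 = 0 then 1 else -1) * ρ (p1, p2) (q1, q2)) := by
    rw [wmat, Matrix.mul_diagonal, Matrix.diagonal_mul]
    ring
  rw [Matrix.sub_apply, Matrix.smul_apply, Matrix.smul_apply, hR]
  simp [smul_eq_mul]

lemma aux_bound (a nb : ℝ) (ha : 0 ≤ a) (hnb : 0 ≤ nb)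
    (ρ : Matrix (Fin 2 × Fin 2) (Fin 2 × Fin 2) ℂ) (hρ : Density ρ) :
    traceNorm (idTensor (theta a nb) ρ) ≤ a + nb := by
  have hP : ((a : ℂ) • ρ).PosSemidef := aux_psd_smul hρ.1 ha
  have hWρ : (wmat * ρ * wmatᴴ).PosSemidef := hρ.1.mul_mul_conjTranspose_same wmat
  have hQ : ((nb : ℂ) • (wmat * ρ * wmatᴴ)).PosSemidef := aux_psd_smul hWρ hnb
  have hb := aux_traceNorm_sub_le hP hQ
  rw [← aux_idTensor_theta] at hb
  have htrP : Complex.re ((a : ℂ) • ρ).trace = a := by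
    rw [Matrix.trace_smul, hρ.2, smul_eq_mul, mul_one, Complex.ofReal_re]
  have htrW : (wmat * ρ * wmatᴴ).trace = 1 := by
    rw [Matrix.trace_mul_cycle, aux_wmat_conjTranspose, aux_wmat_mul_self, one_mul, hρ.2]
  have htrQ : Complex.re ((nb : ℂ) • (wmat * ρ * wmatᴴ)).trace = nb := by
    rw [Matrix.trace_smul, htrW, smul_eq_mul, mul_one, Complex.ofReal_re]
  rw [htrP, htrQ] at hb
  exact hb

end BoundAux
section WitnessAux
open ComplexOrder

noncomputable def r2c : ℂ := (((Real.sqrt 2)⁻¹ : ℝ) : ℂ)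

lemma aux_r2c_sq : r2c * r2c = 1 / 2 := by
  rw [r2c, ← Complex.ofReal_mul, ← mul_inv, Real.mul_self_sqrt (by norm_num : (0:ℝ) ≤ 2)]
  norm_num

lemma aux_r2c_star : star r2c = r2c := by
  rw [r2c, Complex.star_def, Complex.conj_ofReal]

lemma aux_r2c_conj : (starRingEnd ℂ) r2c = r2c := by
  rw [r2c, Complex.conj_ofReal]

/-- The unit vector for the maximally entangled state. -/
noncomputable def mesVec : Fin 2 × Fin 2 → ℂ := fun p => if p.1 = p.2 then r2c else 0

/-- The maximally entangled state. -/
noncomputable def mes : Matrix (Fin 2 × Fin 2) (Fin 2 × Fin 2) ℂ :=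
  Matrix.of fun p q => mesVec p * star (mesVec q)

lemma aux_mes_density : Density mes := by
  refine ⟨Matrix.PosSemidef.of_dotProduct_mulVec_nonneg ?_ ?_, ?_⟩
  · ext p q
    simp only [Matrix.conjTranspose_apply, mes, Matrix.of_apply, star_mul', star_star]
    ring
  · intro x
    set z : ℂ := ∑ q, star (mesVec q) * x q with hz
    have hsz : star z = ∑ p, star (x p) * mesVec p := by
      rw [hz, star_sum]
      exact Finset.sum_congr rfl fun q _ => by rw [star_mul', star_star, mul_comm]
    have e : dotProduct (star x) (mes *ᵥ x) = star z * z := by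
      calc dotProduct (star x) (mes *ᵥ x)
          = ∑ p, star (x p) * (∑ q, (mesVec p * star (mesVec q)) * x q) := rfl
        _ = ∑ p, (star (x p) * mesVec p) * (∑ q, star (mesVec q) * x q) := by
            refine Finset.sum_congr rfl fun p _ => ?_
            rw [Finset.mul_sum, Finset.mul_sum]
            refine congrArg _ (funext fun q => ?_)
            ring
        _ = (∑ p, star (x p) * mesVec p) * z := by rw [← Finset.sum_mul, hz]
        _ = star z * z := by rw [hsz]
    rw [e]
    exact star_mul_self_nonneg z
  · have : mes.trace = ∑ p, mesVec p * star (mesVec p) := rfl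
    rw [this, Fintype.sum_prod_type]
    simp [Fin.sum_univ_two, mesVec, aux_r2c_star, aux_r2c_sq]
    norm_num [aux_r2c_conj, aux_r2c_sq]

/-- Eigenvalue function for the witness output. -/
def ddw (a nb : ℝ) : Fin 2 × Fin 2 → ℝ := fun p =>
  if p = (0, 0) then a else if p = (1, 1) then -nb else 0

/-- Diagonalizing unitary for the witness output. -/
noncomputable def Uw : Matrix (Fin 2 × Fin 2) (Fin 2 × Fin 2) ℂ :=
  Matrix.of fun p j =>
    if j = (0, 0) then (if p.1 = p.2 then r2c else 0)
    else if j = (1, 1) then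
      (if p = (0, 0) then r2c else if p = (1, 1) then -r2c else 0)
    else (if p = j then 1 else 0)

lemma aux_Uw_mem : Uw ∈ Matrix.unitaryGroup (Fin 2 × Fin 2) ℂ := by
  rw [Matrix.mem_unitaryGroup_iff]
  ext p q
  show (∑ j, Uw p j * star (Uw q j)) = (1 : Matrix (Fin 2 × Fin 2) (Fin 2 × Fin 2) ℂ) p q
  fin_cases p <;> fin_cases q <;>
    simp [Uw, Fintype.sum_prod_type, Fin.sum_univ_two, Matrix.one_apply, aux_r2c_star, aux_r2c_conj,
      Prod.ext_iff] <;>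
    norm_num [aux_r2c_conj, aux_r2c_sq]

lemma aux_witness_diag (a nb : ℝ) :
    idTensor (theta a nb) mes
      = Uw * Matrix.diagonal (fun i => ((ddw a nb i : ℝ) : ℂ)) * Uwᴴ := by
  rw [aux_idTensor_theta, aux_wmat_conjTranspose]
  ext p q
  have hR : (Uw * Matrix.diagonal (fun i => ((ddw a nb i : ℝ) : ℂ)) * Uwᴴ) p q
      = ∑ j, Uw p j * ((ddw a nb j : ℝ) : ℂ) * star (Uw q j) := by
    rw [Matrix.mul_apply]
    refine Finset.sum_congr rfl fun j _ => ?_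
    rw [Matrix.mul_diagonal, Matrix.conjTranspose_apply]
  rw [hR]
  fin_cases p <;> fin_cases q <;>
    simp [Uw, mes, mesVec, wmat, ddw, Fintype.sum_prod_type, Fin.sum_univ_two,
      Matrix.mul_diagonal, Matrix.diagonal_mul, aux_r2c_star, Prod.ext_iff] <;>
    push_cast <;> ring

lemma aux_witness_traceNorm (a nb : ℝ) (ha : 0 ≤ a) (hnb : 0 ≤ nb) :
    traceNorm (idTensor (theta a nb) mes) = a + nb := by
  rw [aux_traceNorm_of_diag Uw aux_Uw_mem (ddw a nb) (aux_witness_diag a nb)]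
  rw [Fintype.sum_prod_type]
  simp [Fin.sum_univ_two, ddw, Prod.ext_iff, abs_of_nonneg ha, abs_of_nonneg hnb]

end WitnessAux
/-- the inverse of the qubit dephasing channel (0 ≤ p < 1/2) is
trace preserving, with diamond norm `1/(1-2p)`. -/
theorem dephasing_inverse_diamondNorm (p : ℝ) (h0 : 0 ≤ p) (h1 : p < 1 / 2)
    (Ψ : Matrix (Fin 2) (Fin 2) ℂ →ₗ[ℂ] Matrix (Fin 2) (Fin 2) ℂ)
    (hl : Ψ ∘ₗ dephasing p = LinearMap.id)
    (hr : dephasing p ∘ₗ Ψ = LinearMap.id) :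
    (∀ X : Matrix (Fin 2) (Fin 2) ℂ, (Ψ X).trace = X.trace) ∧
    diamondNorm Ψ = 1 / (1 - 2 * p) := by
  have hq : (0:ℝ) < 1 - 2 * p := by linarith
  have hq' : (1:ℝ) - 2 * p ≠ 0 := ne_of_gt hq
  set a : ℝ := (1 - p) / (1 - 2 * p) with ha_def
  set nb : ℝ := p / (1 - 2 * p) with hnb_def
  have ha : 0 ≤ a := div_nonneg (by linarith) (le_of_lt hq)
  have hnb : 0 ≤ nb := div_nonneg h0 (le_of_lt hq)
  have hc1 : (1 - p) * a - p * nb = 1 := by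
    rw [ha_def, hnb_def, mul_div_assoc', mul_div_assoc', div_sub_div_same, div_eq_one_iff_eq hq']; ring
  have hc2 : p * a - (1 - p) * nb = 0 := by
    rw [ha_def, hnb_def]; field_simp; ring
  have hsum : a + nb = 1 / (1 - 2 * p) := by
    rw [ha_def, hnb_def]; field_simp; ring
  have hdiff : a - nb = 1 := by
    rw [ha_def, hnb_def, div_sub_div_same, div_eq_one_iff_eq hq']; ring
  have hΨ : Ψ = theta a nb := aux_psi_eq_theta p a nb hc1 hc2 Ψ hl
  constructor
  · intro X
    rw [hΨ]
    exact aux_theta_trace a nb hdiff X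
  · rw [hΨ]
    have hwit : traceNorm (idTensor (theta a nb) mes) = a + nb :=
      aux_witness_traceNorm a nb ha hnb
    have hmem : (a + nb) ∈ {x : ℝ | ∃ ρ : Matrix (Fin 2 × Fin 2) (Fin 2 × Fin 2) ℂ,
        Density ρ ∧ x = traceNorm (idTensor (theta a nb) ρ)} :=
      ⟨mes, aux_mes_density, hwit.symm⟩
    have hub : ∀ x ∈ {x : ℝ | ∃ ρ : Matrix (Fin 2 × Fin 2) (Fin 2 × Fin 2) ℂ,
        Density ρ ∧ x = traceNorm (idTensor (theta a nb) ρ)}, x ≤ a + nb := by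
      rintro x ⟨ρ, hρ, rfl⟩
      exact aux_bound a nb ha hnb ρ hρ
    rw [diamondNorm, ← hsum]
    exact le_antisymm (csSup_le ⟨a + nb, hmem⟩ hub) (le_csSup ⟨a + nb, hub⟩ hmem)
end
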